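/- arXiv:2106.02915 — 5 statements merged into one kernel-verified Lean document; each statement's English description precedes it below -/
import Mathlib

section
/- Suppose the transfer function G is Hermitian, i.e. every A_j is Hermitian, C = B^*, and D is Hermitian, and assume B ≠ 0. Let w = (w_0, w_1) be a proper permutation of {0,1,…,m}. Then the PGF pencil 𝕂_w(λ) of G is a Hermitian pencil if and only if the PGF pencil K_w(λ) of P is a Hermitian pencil and CIP(w_0) = (0, 0); in that case 𝕂_w(λ) = [[K_w(λ), e_m ⊗ B],[e_m^T ⊗ B^*, D]]. -/
open Matrix

open Fin.NatCast

noncomputable section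

/-- The matrix polynomial `P(λ) = A_0 + λ A_1 + ⋯ + λ^m A_m` evaluated at `lam`. -/
def PEval (m n : ℕ) (A : Fin (m + 1) → Matrix (Fin n) (Fin n) ℂ) (lam : ℂ) :
    Matrix (Fin n) (Fin n) ℂ :=
  ∑ j : Fin (m + 1), lam ^ (j : ℕ) • A j

/-- `P` is regular: `det P(λ)` is not identically zero. -/
def Regular (m n : ℕ) (A : Fin (m + 1) → Matrix (Fin n) (Fin n) ℂ) : Prop :=
  ∃ lam : ℂ, (PEval m n A lam).det ≠ 0

/-- The Fiedler matrix `M_i` of `P`, an `nm × nm` matrix indexed blockwise by `Fin m × Fin n`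
(block row `0` is the top block row). -/
def FM (m n : ℕ) (A : Fin (m + 1) → Matrix (Fin n) (Fin n) ℂ) (i : ℕ) :
    Matrix (Fin m × Fin n) (Fin m × Fin n) ℂ :=
  Matrix.of fun p q =>
    (if i = 0 then
      if p.1 = q.1 then
        (if (p.1 : ℕ) = m - 1 then -A 0 else (1 : Matrix (Fin n) (Fin n) ℂ)) else 0
    else if i = m then
      if p.1 = q.1 then (if (p.1 : ℕ) = 0 then A (m : Fin (m + 1)) else 1) else 0
    else
      if (p.1 : ℕ) = m - i - 1 ∧ (q.1 : ℕ) = m - i - 1 then -A (i : Fin (m + 1))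
      else if (p.1 : ℕ) = m - i - 1 ∧ (q.1 : ℕ) = m - i then 1
      else if (p.1 : ℕ) = m - i ∧ (q.1 : ℕ) = m - i - 1 then 1
      else if (p.1 : ℕ) = m - i ∧ (q.1 : ℕ) = m - i then 0
      else if p.1 = q.1 then 1 else 0) p.2 q.2

/-- `e_j ⊗ B` (with `j` 1-indexed): the `nm × r` block column matrix with `B` in block row `j`. -/
def eB (m n r : ℕ) (j : ℕ) (B : Matrix (Fin n) (Fin r) ℂ) :
    Matrix (Fin m × Fin n) (Fin r) ℂ :=
  Matrix.of fun p q => if (p.1 : ℕ) + 1 = j then B p.2 q else 0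

/-- `e_j^T ⊗ C` (with `j` 1-indexed): the `r × nm` block row matrix with `C` in block column `j`. -/
def eC (m n r : ℕ) (j : ℕ) (C : Matrix (Fin r) (Fin n) ℂ) :
    Matrix (Fin r) (Fin m × Fin n) ℂ :=
  Matrix.of fun q p => if (p.1 : ℕ) + 1 = j then C q p.2 else 0

/-- `M_σ = M_{σ⁻¹(1)} M_{σ⁻¹(2)} ⋯ M_{σ⁻¹(m)}` (here positions are 0-indexed: `σ i` is the
0-indexed position of the factor `M_i`). -/
def Mperm (m n : ℕ) (A : Fin (m + 1) → Matrix (Fin n) (Fin n) ℂ) (σ : Equiv.Perm (Fin m)) :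
    Matrix (Fin m × Fin n) (Fin m × Fin n) ℂ :=
  (List.ofFn fun j : Fin m => FM m n A ((σ.symm j : Fin m) : ℕ)).prod

/-- The Fiedler pencil `L_σ(λ) = λ M_m − M_σ` of `P` evaluated at `lam`. -/
def LP (m n : ℕ) (A : Fin (m + 1) → Matrix (Fin n) (Fin n) ℂ) (σ : Equiv.Perm (Fin m))
    (lam : ℂ) : Matrix (Fin m × Fin n) (Fin m × Fin n) ℂ :=
  lam • FM m n A m - Mperm m n A σ

/-- `σ` has a consecution at `d` (i.e. `σ(d) < σ(d+1)`). -/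
def ConsAt (m : ℕ) (σ : Equiv.Perm (Fin m)) (d : ℕ) : Prop :=
  ∃ h : d + 1 < m, (σ ⟨d, Nat.lt_of_succ_lt h⟩ : ℕ) < (σ ⟨d + 1, h⟩ : ℕ)

/-- `σ` has an inversion at `d` (i.e. `σ(d) > σ(d+1)`). -/
def InvAt (m : ℕ) (σ : Equiv.Perm (Fin m)) (d : ℕ) : Prop :=
  ∃ h : d + 1 < m, (σ ⟨d + 1, h⟩ : ℕ) < (σ ⟨d, Nat.lt_of_succ_lt h⟩ : ℕ)

/-- `c1` is the number of initial consecutive consecutions of `σ` (the first entry of CISS(σ)). -/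
def IsC1 (m : ℕ) (σ : Equiv.Perm (Fin m)) (c1 : ℕ) : Prop :=
  (∀ d < c1, ConsAt m σ d) ∧ ¬ ConsAt m σ c1

/-- `i1` is the number of consecutive inversions of `σ` at `c1, …, c1 + i1 − 1`
(the second entry of CISS(σ)). -/
def IsI1 (m : ℕ) (σ : Equiv.Perm (Fin m)) (c1 i1 : ℕ) : Prop :=
  (∀ d, c1 ≤ d → d < c1 + i1 → InvAt m σ d) ∧ ¬ InvAt m σ (c1 + i1)

/-- The system matrix `S(λ) = [[−P(λ), B], [C, D]]` evaluated at `lam`. -/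
def SMat (m n r : ℕ) (A : Fin (m + 1) → Matrix (Fin n) (Fin n) ℂ)
    (B : Matrix (Fin n) (Fin r) ℂ) (C : Matrix (Fin r) (Fin n) ℂ) (D : Matrix (Fin r) (Fin r) ℂ)
    (lam : ℂ) : Matrix (Fin n ⊕ Fin r) (Fin n ⊕ Fin r) ℂ :=
  Matrix.fromBlocks (-(PEval m n A lam)) B C D

/-- The Fiedler pencil `𝕊_σ(λ)` of the system matrix, evaluated at `lam`:
`[[−L_σ(λ), e_m ⊗ B], [e_{m−c1}^T ⊗ C, D]]` if `c1 > 0`, and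
`[[−L_σ(λ), e_{m−i1} ⊗ B], [e_m^T ⊗ C, D]]` if `c1 = 0`. -/
def SP (m n r : ℕ) (A : Fin (m + 1) → Matrix (Fin n) (Fin n) ℂ)
    (B : Matrix (Fin n) (Fin r) ℂ) (C : Matrix (Fin r) (Fin n) ℂ) (D : Matrix (Fin r) (Fin r) ℂ)
    (σ : Equiv.Perm (Fin m)) (c1 i1 : ℕ) (lam : ℂ) :
    Matrix ((Fin m × Fin n) ⊕ Fin r) ((Fin m × Fin n) ⊕ Fin r) ℂ :=
  if 0 < c1 then
    Matrix.fromBlocks (-(LP m n A σ lam)) (eB m n r m B) (eC m n r (m - c1) C) D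
  else
    Matrix.fromBlocks (-(LP m n A σ lam)) (eB m n r (m - i1) B) (eC m n r m C) D

/-- The Fiedler matrices `𝕄_i` of the system matrix `S(λ)`. -/
def SFM (m n r : ℕ) (A : Fin (m + 1) → Matrix (Fin n) (Fin n) ℂ)
    (B : Matrix (Fin n) (Fin r) ℂ) (C : Matrix (Fin r) (Fin n) ℂ) (D : Matrix (Fin r) (Fin r) ℂ)
    (i : ℕ) : Matrix ((Fin m × Fin n) ⊕ Fin r) ((Fin m × Fin n) ⊕ Fin r) ℂ :=
  if i = 0 then Matrix.fromBlocks (FM m n A 0) (-(eB m n r m B)) (-(eC m n r m C)) (-D)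
  else if i = m then Matrix.fromBlocks (FM m n A m) 0 0 0
  else Matrix.fromBlocks (FM m n A i) 0 0 1

/-- `w = (w0, w1)` is a proper permutation of `{0, 1, …, m}`. -/
def ProperPerm (m : ℕ) (w0 w1 : List ℕ) : Prop :=
  List.Perm (w0 ++ w1) (List.range (m + 1)) ∧ 0 ∈ w0 ∧ m ∈ w1

/-- `M̂_{w0}`: the product of the Fiedler matrices of `P` in the order listed in `w0`. -/
def hatM0 (m n : ℕ) (A : Fin (m + 1) → Matrix (Fin n) (Fin n) ℂ) (w0 : List ℕ) :
    Matrix (Fin m × Fin n) (Fin m × Fin n) ℂ :=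
  (w0.map (FM m n A)).prod

/-- `M̂_{w1} = M_{i1}⁻¹ ⋯ M_{ip}⁻¹ M_m M_{j1}⁻¹ ⋯ M_{jq}⁻¹` for `w1 = (i1,…,ip,m,j1,…,jq)`. -/
def hatM1 (m n : ℕ) (A : Fin (m + 1) → Matrix (Fin n) (Fin n) ℂ) (w1 : List ℕ) :
    Matrix (Fin m × Fin n) (Fin m × Fin n) ℂ :=
  (w1.map (fun i => if i = m then FM m n A m else (FM m n A i)⁻¹)).prod

/-- The PGF pencil `K_w(λ) = λ M̂_{w1} − M̂_{w0}` of `P`, evaluated at `lam`. -/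
def KP (m n : ℕ) (A : Fin (m + 1) → Matrix (Fin n) (Fin n) ℂ) (w0 w1 : List ℕ) (lam : ℂ) :
    Matrix (Fin m × Fin n) (Fin m × Fin n) ℂ :=
  lam • hatM1 m n A w1 - hatM0 m n A w0

/-- `𝕄̂_{w0}` for the system Fiedler matrices. -/
def hatS0 (m n r : ℕ) (A : Fin (m + 1) → Matrix (Fin n) (Fin n) ℂ)
    (B : Matrix (Fin n) (Fin r) ℂ) (C : Matrix (Fin r) (Fin n) ℂ) (D : Matrix (Fin r) (Fin r) ℂ)
    (w0 : List ℕ) : Matrix ((Fin m × Fin n) ⊕ Fin r) ((Fin m × Fin n) ⊕ Fin r) ℂ :=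
  (w0.map (SFM m n r A B C D)).prod

/-- `𝕄̂_{w1}` for the system Fiedler matrices. -/
def hatS1 (m n r : ℕ) (A : Fin (m + 1) → Matrix (Fin n) (Fin n) ℂ)
    (B : Matrix (Fin n) (Fin r) ℂ) (C : Matrix (Fin r) (Fin n) ℂ) (D : Matrix (Fin r) (Fin r) ℂ)
    (w1 : List ℕ) : Matrix ((Fin m × Fin n) ⊕ Fin r) ((Fin m × Fin n) ⊕ Fin r) ℂ :=
  (w1.map (fun i => if i = m then SFM m n r A B C D m else (SFM m n r A B C D i)⁻¹)).prod

/-- The PGF pencil `𝕂_w(λ) = λ 𝕄̂_{w1} − 𝕄̂_{w0}` of `G`, evaluated at `lam`. -/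
def SKP (m n r : ℕ) (A : Fin (m + 1) → Matrix (Fin n) (Fin n) ℂ)
    (B : Matrix (Fin n) (Fin r) ℂ) (C : Matrix (Fin r) (Fin n) ℂ) (D : Matrix (Fin r) (Fin r) ℂ)
    (w0 w1 : List ℕ) (lam : ℂ) :
    Matrix ((Fin m × Fin n) ⊕ Fin r) ((Fin m × Fin n) ⊕ Fin r) ℂ :=
  lam • hatS1 m n r A B C D w1 - hatS0 m n r A B C D w0

/-- The index tuple `w` has a consecution at `d`. -/
def LCons (w : List ℕ) (d : ℕ) : Prop :=
  d ∈ w ∧ d + 1 ∈ w ∧ w.idxOf d < w.idxOf (d + 1)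

/-- The index tuple `w` has an inversion at `d`. -/
def LInv (w : List ℕ) (d : ℕ) : Prop :=
  d ∈ w ∧ d + 1 ∈ w ∧ w.idxOf (d + 1) < w.idxOf d

/-- `CIP(w) = (c0, i0)`. -/
def IsCIP (w : List ℕ) (c0 i0 : ℕ) : Prop :=
  ((∀ d < c0, LCons w d) ∧ ¬ LCons w c0) ∧ ((∀ d < i0, LInv w d) ∧ ¬ LInv w i0)

/-- Block index of an index of an `(nm+r) × (nm+r)` matrix: the first `m` (diagonal) blocks
have size `n`, the last one size `r`. -/
def sIdx (m n r : ℕ) : (Fin m × Fin n) ⊕ Fin r → ℕ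
  | Sum.inl p => p.1
  | Sum.inr _ => m

/-- An `(nm+r) × (nm+r)` matrix has block bandwidth `k` (e.g. `k = 1`: block tridiagonal,
`k = 2`: block pentadiagonal). -/
def BlockBandS (m n r : ℕ) (k : ℕ)
    (M : Matrix ((Fin m × Fin n) ⊕ Fin r) ((Fin m × Fin n) ⊕ Fin r) ℂ) : Prop :=
  ∀ x y, (sIdx m n r x + k < sIdx m n r y ∨ sIdx m n r y + k < sIdx m n r x) → M x y = 0

/-- An `nm × nm` matrix has block bandwidth `k`. -/
def BlockBandP (m n : ℕ) (k : ℕ) (M : Matrix (Fin m × Fin n) (Fin m × Fin n) ℂ) : Prop :=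
  ∀ x y : Fin m × Fin n, ((x.1 : ℕ) + k < (y.1 : ℕ) ∨ (y.1 : ℕ) + k < (x.1 : ℕ)) → M x y = 0

/-- The degree-`k` Horner shift `P_k(λ) = A_{m−k} + λ A_{m−k+1} + ⋯ + λ^k A_m`. -/
def Horner (m n : ℕ) (A : Fin (m + 1) → Matrix (Fin n) (Fin n) ℂ) (k : Fin (m + 1)) (lam : ℂ) :
    Matrix (Fin n) (Fin n) ℂ :=
  ∑ j : Fin ((k : ℕ) + 1),
    lam ^ (j : ℕ) • A ⟨m - (k : ℕ) + (j : ℕ), by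
      have h1 := j.isLt; have h2 := k.isLt; omega⟩

/-- `N_1`: the zero-degree coefficient of the first companion pencil of `P`. -/
def N1 (m n : ℕ) (A : Fin (m + 1) → Matrix (Fin n) (Fin n) ℂ) :
    Matrix (Fin m × Fin n) (Fin m × Fin n) ℂ :=
  Matrix.of fun p q =>
    (if (p.1 : ℕ) = 0 then -A ((m - 1 - (q.1 : ℕ) : ℕ) : Fin (m + 1))
     else if (p.1 : ℕ) = (q.1 : ℕ) + 1 then (1 : Matrix (Fin n) (Fin n) ℂ)
     else 0) p.2 q.2

/-- `N_2`: the zero-degree coefficient of the second companion pencil of `P`. -/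
def N2 (m n : ℕ) (A : Fin (m + 1) → Matrix (Fin n) (Fin n) ℂ) :
    Matrix (Fin m × Fin n) (Fin m × Fin n) ℂ :=
  Matrix.of fun p q =>
    (if (q.1 : ℕ) = 0 then -A ((m - 1 - (p.1 : ℕ) : ℕ) : Fin (m + 1))
     else if (q.1 : ℕ) = (p.1 : ℕ) + 1 then (1 : Matrix (Fin n) (Fin n) ℂ)
     else 0) p.2 q.2

/-- The first companion form `C_1(λ) = [[−L_1(λ), e_1 ⊗ B], [e_m^T ⊗ C, D]]` of `S`. -/
def C1P (m n r : ℕ) (A : Fin (m + 1) → Matrix (Fin n) (Fin n) ℂ)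
    (B : Matrix (Fin n) (Fin r) ℂ) (C : Matrix (Fin r) (Fin n) ℂ) (D : Matrix (Fin r) (Fin r) ℂ)
    (lam : ℂ) : Matrix ((Fin m × Fin n) ⊕ Fin r) ((Fin m × Fin n) ⊕ Fin r) ℂ :=
  Matrix.fromBlocks (-(lam • FM m n A m - N1 m n A)) (eB m n r 1 B) (eC m n r m C) D

/-- The second companion form `C_2(λ) = [[−L_2(λ), e_m ⊗ B], [e_1^T ⊗ C, D]]` of `S`. -/
def C2P (m n r : ℕ) (A : Fin (m + 1) → Matrix (Fin n) (Fin n) ℂ)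
    (B : Matrix (Fin n) (Fin r) ℂ) (C : Matrix (Fin r) (Fin n) ℂ) (D : Matrix (Fin r) (Fin r) ℂ)
    (lam : ℂ) : Matrix ((Fin m × Fin n) ⊕ Fin r) ((Fin m × Fin n) ⊕ Fin r) ℂ :=
  Matrix.fromBlocks (-(lam • FM m n A m - N2 m n A)) (eB m n r m B) (eC m n r 1 C) D

namespace Stmt9Aux

open Matrix

/-! ### Sum helpers -/

lemma sum_single' {M : Type*} [AddCommMonoid M] {m : ℕ} (f : Fin m → M) (b0 : Fin m)
    (hf : ∀ b : Fin m, b ≠ b0 → f b = 0) : ∑ b, f b = f b0 :=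
  Finset.sum_eq_single_of_mem b0 (Finset.mem_univ b0) (fun b _ hb => hf b hb)

lemma sum_pair' {M : Type*} [AddCommMonoid M] {m : ℕ} (f : Fin m → M) (b0 b1 : Fin m)
    (hne : b0 ≠ b1) (hf : ∀ b : Fin m, b ≠ b0 → b ≠ b1 → f b = 0) :
    ∑ b, f b = f b0 + f b1 := by
  rw [← Finset.sum_pair hne]
  refine (Finset.sum_subset (Finset.subset_univ _) fun x _ hx => ?_).symm
  simp only [Finset.mem_insert, Finset.mem_singleton] at hx
  push_neg at hx
  exact hf x hx.1 hx.2

/-! ### Block matrices -/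

def blkOf (m n : ℕ) (F : Fin m → Fin m → Matrix (Fin n) (Fin n) ℂ) :
    Matrix (Fin m × Fin n) (Fin m × Fin n) ℂ :=
  Matrix.of fun p q => F p.1 q.1 p.2 q.2

lemma blkOf_apply {m n : ℕ} (F : Fin m → Fin m → Matrix (Fin n) (Fin n) ℂ)
    (p q : Fin m × Fin n) : blkOf m n F p q = F p.1 q.1 p.2 q.2 := rfl

lemma blkOf_mul {m n : ℕ} (F G : Fin m → Fin m → Matrix (Fin n) (Fin n) ℂ) :
    blkOf m n F * blkOf m n G = blkOf m n (fun a c => ∑ b, F a b * G b c) := by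
  ext p q
  rw [Matrix.mul_apply, blkOf_apply, Matrix.sum_apply]
  rw [Fintype.sum_prod_type]
  refine Finset.sum_congr rfl fun b _ => ?_
  rw [Matrix.mul_apply]
  rfl

lemma blkOf_eq_one {m n : ℕ} (F : Fin m → Fin m → Matrix (Fin n) (Fin n) ℂ)
    (hF : ∀ a c : Fin m, F a c = if (a : ℕ) = (c : ℕ) then 1 else 0) :
    blkOf m n F = 1 := by
  ext ⟨pb, px⟩ ⟨qb, qx⟩
  rw [blkOf_apply, hF]
  by_cases h : (pb : ℕ) = (qb : ℕ)
  · have hbb : pb = qb := Fin.ext h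
    subst hbb
    rw [if_pos rfl]
    by_cases h2 : px = qx
    · subst h2; simp [Matrix.one_apply]
    · simp [Matrix.one_apply, h2, Prod.ext_iff]
  · have hne : pb ≠ qb := fun hh => h (by rw [hh])
    rw [if_neg h]
    simp [Matrix.one_apply, Prod.ext_iff, hne]

/-! ### The Fiedler blocks -/

def fB (m n : ℕ) (A : Fin (m + 1) → Matrix (Fin n) (Fin n) ℂ) (i : ℕ) :
    Fin m → Fin m → Matrix (Fin n) (Fin n) ℂ := fun a c =>
  if (a : ℕ) = m - i - 1 ∧ (c : ℕ) = m - i - 1 then -A (i : Fin (m + 1))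
  else if (a : ℕ) = m - i - 1 ∧ (c : ℕ) = m - i then 1
  else if (a : ℕ) = m - i ∧ (c : ℕ) = m - i - 1 then 1
  else if (a : ℕ) = m - i ∧ (c : ℕ) = m - i then 0
  else if (a : ℕ) = (c : ℕ) then 1 else 0

def gB (m n : ℕ) (A : Fin (m + 1) → Matrix (Fin n) (Fin n) ℂ) (i : ℕ) :
    Fin m → Fin m → Matrix (Fin n) (Fin n) ℂ := fun a c =>
  if (a : ℕ) = m - i - 1 ∧ (c : ℕ) = m - i - 1 then 0
  else if (a : ℕ) = m - i - 1 ∧ (c : ℕ) = m - i then 1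
  else if (a : ℕ) = m - i ∧ (c : ℕ) = m - i - 1 then 1
  else if (a : ℕ) = m - i ∧ (c : ℕ) = m - i then A (i : Fin (m + 1))
  else if (a : ℕ) = (c : ℕ) then 1 else 0

lemma FM_mid {m n : ℕ} (A : Fin (m + 1) → Matrix (Fin n) (Fin n) ℂ) (i : ℕ)
    (h1 : 1 ≤ i) (h2 : i < m) : FM m n A i = blkOf m n (fB m n A i) := by
  ext p q
  simp only [FM, Matrix.of_apply]
  rw [if_neg (by omega : ¬ i = 0), if_neg (by omega : ¬ i = m)]
  rw [blkOf_apply]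
  unfold fB
  simp only [← Fin.val_inj]

section RowCol

variable {m n : ℕ} (A : Fin (m + 1) → Matrix (Fin n) (Fin n) ℂ) {i : ℕ}

lemma fB_row_d (h1 : 1 ≤ i) (h2 : i < m) {a c : Fin m} (ha : (a : ℕ) = m - i - 1) :
    fB m n A i a c = if (c : ℕ) = m - i - 1 then -A (i : Fin (m+1))
      else if (c : ℕ) = m - i then 1 else 0 := by
  have := a.isLt; have := c.isLt
  unfold fB; split_ifs <;> first | rfl | omega

lemma fB_row_d1 (h1 : 1 ≤ i) (h2 : i < m) {a c : Fin m} (ha : (a : ℕ) = m - i) :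
    fB m n A i a c = if (c : ℕ) = m - i - 1 then 1 else 0 := by
  have := a.isLt; have := c.isLt
  unfold fB; split_ifs <;> first | rfl | omega

lemma fB_row_other (h1 : 1 ≤ i) (h2 : i < m) {a c : Fin m} (ha1 : (a : ℕ) ≠ m - i - 1) (ha2 : (a : ℕ) ≠ m - i) :
    fB m n A i a c = if (a : ℕ) = (c : ℕ) then 1 else 0 := by
  have := a.isLt; have := c.isLt
  unfold fB; split_ifs <;> first | rfl | omega

lemma fB_col_d1 (h1 : 1 ≤ i) (h2 : i < m) {a c : Fin m} (hc : (c : ℕ) = m - i) :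
    fB m n A i a c = if (a : ℕ) = m - i - 1 then 1 else 0 := by
  have := a.isLt; have := c.isLt
  unfold fB; split_ifs <;> first | rfl | omega

lemma fB_col_other (h1 : 1 ≤ i) (h2 : i < m) {a c : Fin m} (hc1 : (c : ℕ) ≠ m - i - 1) (hc2 : (c : ℕ) ≠ m - i) :
    fB m n A i a c = if (a : ℕ) = (c : ℕ) then 1 else 0 := by
  have := a.isLt; have := c.isLt
  unfold fB; split_ifs <;> first | rfl | omega

lemma gB_row_d (h1 : 1 ≤ i) (h2 : i < m) {a c : Fin m} (ha : (a : ℕ) = m - i - 1) :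
    gB m n A i a c = if (c : ℕ) = m - i then 1 else 0 := by
  have := a.isLt; have := c.isLt
  unfold gB; split_ifs <;> first | rfl | omega

lemma gB_row_d1 (h1 : 1 ≤ i) (h2 : i < m) {a c : Fin m} (ha : (a : ℕ) = m - i) :
    gB m n A i a c = if (c : ℕ) = m - i - 1 then 1
      else if (c : ℕ) = m - i then A (i : Fin (m+1)) else 0 := by
  have := a.isLt; have := c.isLt
  unfold gB; split_ifs <;> first | rfl | omega

lemma gB_row_other (h1 : 1 ≤ i) (h2 : i < m) {a c : Fin m} (ha1 : (a : ℕ) ≠ m - i - 1) (ha2 : (a : ℕ) ≠ m - i) :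
    gB m n A i a c = if (a : ℕ) = (c : ℕ) then 1 else 0 := by
  have := a.isLt; have := c.isLt
  unfold gB; split_ifs <;> first | rfl | omega

end RowCol

end Stmt9Aux
namespace Stmt9Aux

open Matrix

section Inv

variable {m n : ℕ} (A : Fin (m + 1) → Matrix (Fin n) (Fin n) ℂ)

lemma fB_mul_gB (i : ℕ) (h1 : 1 ≤ i) (h2 : i < m) :
    blkOf m n (fB m n A i) * blkOf m n (gB m n A i) = 1 := by
  rw [blkOf_mul]
  apply blkOf_eq_one
  intro a c
  have hav := a.isLt; have hcv := c.isLt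
  have hb0v : ((⟨m - i - 1, by omega⟩ : Fin m) : ℕ) = m - i - 1 := rfl
  have hb1v : ((⟨m - i, by omega⟩ : Fin m) : ℕ) = m - i := rfl
  by_cases ha : (a : ℕ) = m - i - 1
  · rw [sum_pair' _ (⟨m - i - 1, by omega⟩ : Fin m) (⟨m - i, by omega⟩ : Fin m)
      (by simp only [ne_eq, Fin.ext_iff]; omega) (fun b hb hb' => by
        rw [fB_row_d A h1 h2 ha, if_neg, if_neg, zero_mul]
        · intro h; exact hb' (Fin.ext (by omega))
        · intro h; exact hb (Fin.ext (by omega)))]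
    simp only [fB_row_d A h1 h2 ha, gB_row_d A h1 h2 hb0v, gB_row_d1 A h1 h2 hb1v,
      hb0v, hb1v]
    split_ifs <;> first | omega | simp
  · by_cases ha2 : (a : ℕ) = m - i
    · rw [sum_single' _ (⟨m - i - 1, by omega⟩ : Fin m) (fun b hb => by
        rw [fB_row_d1 A h1 h2 ha2, if_neg, zero_mul]
        intro h; exact hb (Fin.ext (by omega)))]
      simp only [fB_row_d1 A h1 h2 ha2, gB_row_d A h1 h2 hb0v, hb0v]
      split_ifs <;> first | omega | simp
    · rw [sum_single' _ a (fun b hb => by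
        rw [fB_row_other A h1 h2 ha ha2, if_neg, zero_mul]
        intro h; exact hb (Fin.ext (by omega)))]
      simp only [fB_row_other A h1 h2 ha ha2, gB_row_other A h1 h2 ha ha2]
      split_ifs <;> first | omega | simp

lemma gB_mul_fB (i : ℕ) (h1 : 1 ≤ i) (h2 : i < m) :
    blkOf m n (gB m n A i) * blkOf m n (fB m n A i) = 1 := by
  rw [blkOf_mul]
  apply blkOf_eq_one
  intro a c
  have hav := a.isLt; have hcv := c.isLt
  have hb0v : ((⟨m - i - 1, by omega⟩ : Fin m) : ℕ) = m - i - 1 := rfl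
  have hb1v : ((⟨m - i, by omega⟩ : Fin m) : ℕ) = m - i := rfl
  by_cases ha : (a : ℕ) = m - i - 1
  · rw [sum_single' _ (⟨m - i, by omega⟩ : Fin m) (fun b hb => by
      rw [gB_row_d A h1 h2 ha, if_neg, zero_mul]
      intro h; exact hb (Fin.ext (by omega)))]
    simp only [gB_row_d A h1 h2 ha, fB_row_d1 A h1 h2 hb1v, hb1v]
    split_ifs <;> first | omega | simp
  · by_cases ha2 : (a : ℕ) = m - i
    · rw [sum_pair' _ (⟨m - i - 1, by omega⟩ : Fin m) (⟨m - i, by omega⟩ : Fin m)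
        (by simp only [ne_eq, Fin.ext_iff]; omega) (fun b hb hb' => by
          rw [gB_row_d1 A h1 h2 ha2, if_neg, if_neg, zero_mul]
          · intro h; exact hb' (Fin.ext (by omega))
          · intro h; exact hb (Fin.ext (by omega)))]
      simp only [gB_row_d1 A h1 h2 ha2, fB_row_d A h1 h2 hb0v, fB_row_d1 A h1 h2 hb1v,
        hb0v, hb1v]
      split_ifs <;> first | omega | simp
    · rw [sum_single' _ a (fun b hb => by
        rw [gB_row_other A h1 h2 ha ha2, if_neg, zero_mul]
        intro h; exact hb (Fin.ext (by omega)))]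
      simp only [gB_row_other A h1 h2 ha ha2, fB_row_other A h1 h2 ha ha2]
      split_ifs <;> first | omega | simp

lemma FM_inv_eq (i : ℕ) (h1 : 1 ≤ i) (h2 : i < m) :
    (FM m n A i)⁻¹ = blkOf m n (gB m n A i) := by
  rw [FM_mid A i h1 h2]
  exact Matrix.inv_eq_right_inv (fB_mul_gB A i h1 h2)

end Inv

end Stmt9Aux
namespace Stmt9Aux

open Matrix

section EB

variable {m n r : ℕ} (A : Fin (m + 1) → Matrix (Fin n) (Fin n) ℂ)
  (B : Matrix (Fin n) (Fin r) ℂ) (C : Matrix (Fin r) (Fin n) ℂ)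

lemma FM_mul_eB_high (j : ℕ) (h1 : 2 ≤ j) (h2 : j < m) :
    FM m n A j * eB m n r m B = eB m n r m B := by
  ext p q
  rw [FM_mid A j (by omega) h2, Matrix.mul_apply, Fintype.sum_prod_type]
  have hbmv : ((⟨m - 1, by omega⟩ : Fin m) : ℕ) = m - 1 := rfl
  rw [sum_single' _ (⟨m - 1, by omega⟩ : Fin m) (fun b hb => by
    have hbv : ¬ ((b : ℕ) + 1 = m) := fun h => hb (Fin.ext (by rw [hbmv]; omega))
    simp [eB, hbv])]
  simp only [blkOf_apply, eB, Matrix.of_apply]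
  rw [fB_col_other A (by omega : 1 ≤ j) h2
    (by rw [hbmv]; omega) (by rw [hbmv]; omega)]
  by_cases hp : (p.1 : ℕ) = m - 1
  · simp only [hbmv, hp, if_pos rfl, if_pos (show (m - 1 : ℕ) + 1 = m by omega)]
    simp [Matrix.one_apply, ite_mul]
  · have hp' : ¬ ((p.1 : ℕ) + 1 = m) := by omega
    have hp'' : ¬ ((p.1 : ℕ) = (m - 1 : ℕ)) := hp
    simp only [hbmv]
    simp [hp', hp'']

lemma eC_mul_FM_high (j : ℕ) (h1 : 2 ≤ j) (h2 : j < m) :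
    eC m n r m C * FM m n A j = eC m n r m C := by
  ext k p
  rw [FM_mid A j (by omega) h2, Matrix.mul_apply, Fintype.sum_prod_type]
  have hbmv : ((⟨m - 1, by omega⟩ : Fin m) : ℕ) = m - 1 := rfl
  rw [sum_single' _ (⟨m - 1, by omega⟩ : Fin m) (fun b hb => by
    have hbv : ¬ ((b : ℕ) + 1 = m) := fun h => hb (Fin.ext (by rw [hbmv]; omega))
    simp [eC, hbv])]
  simp only [blkOf_apply, eC, Matrix.of_apply]
  rw [fB_row_other A (by omega : 1 ≤ j) h2
    (by rw [hbmv]; omega) (by rw [hbmv]; omega)]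
  by_cases hp : (p.1 : ℕ) = m - 1
  · simp only [hbmv, if_pos (show (m - 1 : ℕ) + 1 = m by omega), if_pos hp.symm,
      if_pos (show (p.1 : ℕ) + 1 = m by omega)]
    simp [Matrix.one_apply]
  · have hp' : ¬ ((p.1 : ℕ) + 1 = m) := by omega
    have hp'' : ¬ ((m - 1 : ℕ) = (p.1 : ℕ)) := fun h => hp h.symm
    simp only [hbmv]
    simp [hp', hp'']

lemma FM1_mul_eB (hm : 2 ≤ m) :
    FM m n A 1 * eB m n r m B = eB m n r (m - 1) B := by
  ext p q
  rw [FM_mid A 1 (by omega) (by omega), Matrix.mul_apply, Fintype.sum_prod_type]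
  have hbmv : ((⟨m - 1, by omega⟩ : Fin m) : ℕ) = m - 1 := rfl
  rw [sum_single' _ (⟨m - 1, by omega⟩ : Fin m) (fun b hb => by
    have hbv : ¬ ((b : ℕ) + 1 = m) := fun h => hb (Fin.ext (by rw [hbmv]; omega))
    simp [eB, hbv])]
  simp only [blkOf_apply, eB, Matrix.of_apply]
  rw [fB_col_d1 A (by omega : 1 ≤ 1) (by omega : 1 < m) hbmv]
  by_cases hp : (p.1 : ℕ) = m - 1 - 1
  · simp only [hbmv, hp, if_pos rfl, if_pos (show (m - 1 : ℕ) + 1 = m by omega),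
      if_pos (show ((m : ℕ) - 1 - 1) + 1 = m - 1 by omega)]
    simp [Matrix.one_apply, ite_mul]
  · have hp' : ¬ ((p.1 : ℕ) + 1 = m - 1) := by omega
    simp only [hbmv, if_pos (show (m - 1 : ℕ) + 1 = m by omega)]
    simp [hp, hp']

lemma eC_mul_FM1 (hm : 2 ≤ m) :
    eC m n r m C * FM m n A 1 = eC m n r (m - 1) C := by
  ext k p
  rw [FM_mid A 1 (by omega) (by omega), Matrix.mul_apply, Fintype.sum_prod_type]
  have hbmv : ((⟨m - 1, by omega⟩ : Fin m) : ℕ) = m - 1 := rfl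
  rw [sum_single' _ (⟨m - 1, by omega⟩ : Fin m) (fun b hb => by
    have hbv : ¬ ((b : ℕ) + 1 = m) := fun h => hb (Fin.ext (by rw [hbmv]; omega))
    simp [eC, hbv])]
  simp only [blkOf_apply, eC, Matrix.of_apply]
  rw [fB_row_d1 A (by omega : 1 ≤ 1) (by omega : 1 < m) hbmv]
  by_cases hp : (p.1 : ℕ) = m - 1 - 1
  · simp only [hbmv, hp, if_pos rfl, if_pos (show (m - 1 : ℕ) + 1 = m by omega),
      if_pos (show ((m : ℕ) - 1 - 1) + 1 = m - 1 by omega)]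
    simp [Matrix.one_apply]
  · have hp' : ¬ ((p.1 : ℕ) + 1 = m - 1) := by omega
    simp only [hbmv, if_pos (show (m - 1 : ℕ) + 1 = m by omega)]
    simp [hp, hp']

lemma FM_row_pres (j : ℕ) (h1 : 2 ≤ j) (h2 : j < m)
    (X : Matrix (Fin m × Fin n) (Fin r) ℂ) (p : Fin m × Fin n) (q : Fin r)
    (hp : (p.1 : ℕ) = m - 1) : (FM m n A j * X) p q = X p q := by
  rw [FM_mid A j (by omega) h2, Matrix.mul_apply, Fintype.sum_prod_type]
  rw [sum_single' _ p.1 (fun b hb => by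
    rw [Finset.sum_eq_zero]
    intro y _
    rw [blkOf_apply]
    rw [fB_row_other A (by omega : 1 ≤ j) h2
      (show (p.1 : ℕ) ≠ m - j - 1 by omega) (show (p.1 : ℕ) ≠ m - j by omega)]
    rw [if_neg (fun h => hb (Fin.ext h.symm)), Matrix.zero_apply, zero_mul])]
  simp only [blkOf_apply]
  rw [fB_row_other A (by omega : 1 ≤ j) h2
    (show (p.1 : ℕ) ≠ m - j - 1 by omega) (show (p.1 : ℕ) ≠ m - j by omega), if_pos rfl]
  simp [Matrix.one_apply, ite_mul]

lemma FM_col_pres (j : ℕ) (h1 : 2 ≤ j) (h2 : j < m)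
    (Y : Matrix (Fin r) (Fin m × Fin n) ℂ) (k : Fin r) (p : Fin m × Fin n)
    (hp : (p.1 : ℕ) = m - 1) : (Y * FM m n A j) k p = Y k p := by
  rw [FM_mid A j (by omega) h2, Matrix.mul_apply, Fintype.sum_prod_type]
  rw [sum_single' _ p.1 (fun b hb => by
    rw [Finset.sum_eq_zero]
    intro y _
    rw [blkOf_apply]
    rw [fB_col_other A (by omega : 1 ≤ j) h2
      (show (p.1 : ℕ) ≠ m - j - 1 by omega) (show (p.1 : ℕ) ≠ m - j by omega)]
    rw [if_neg (fun h => hb (Fin.ext h)), Matrix.zero_apply, mul_zero])]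
  simp only [blkOf_apply]
  rw [fB_col_other A (by omega : 1 ≤ j) h2
    (show (p.1 : ℕ) ≠ m - j - 1 by omega) (show (p.1 : ℕ) ≠ m - j by omega), if_pos rfl]
  simp [Matrix.one_apply]

end EB

end Stmt9Aux
namespace Stmt9Aux

open Matrix

section Sys

variable {m n r : ℕ} (A : Fin (m + 1) → Matrix (Fin n) (Fin n) ℂ)
  (B : Matrix (Fin n) (Fin r) ℂ) (C : Matrix (Fin r) (Fin n) ℂ) (D : Matrix (Fin r) (Fin r) ℂ)

lemma SFM_mid (i : ℕ) (h1 : 1 ≤ i) (h2 : i < m) :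
    SFM m n r A B C D i = Matrix.fromBlocks (FM m n A i) 0 0 1 := by
  unfold SFM; rw [if_neg (by omega : ¬ i = 0), if_neg (by omega : ¬ i = m)]

lemma SFM_zero :
    SFM m n r A B C D 0 =
      Matrix.fromBlocks (FM m n A 0) (-(eB m n r m B)) (-(eC m n r m C)) (-D) := by
  unfold SFM; rw [if_pos rfl]

lemma SFM_m (hm : 1 ≤ m) :
    SFM m n r A B C D m = Matrix.fromBlocks (FM m n A m) 0 0 0 := by
  unfold SFM; rw [if_neg (by omega : ¬ m = 0), if_pos rfl]

lemma SFM_inv (i : ℕ) (h1 : 1 ≤ i) (h2 : i < m) :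
    (SFM m n r A B C D i)⁻¹ = Matrix.fromBlocks (FM m n A i)⁻¹ 0 0 1 := by
  rw [SFM_mid A B C D i h1 h2, FM_inv_eq A i h1 h2]
  apply Matrix.inv_eq_right_inv
  rw [Matrix.fromBlocks_multiply]
  rw [FM_mid A i h1 h2, fB_mul_gB A i h1 h2]
  simp [Matrix.fromBlocks_one]

lemma prod_diag (l : List ℕ) (hl : ∀ x ∈ l, 1 ≤ x ∧ x < m) :
    (l.map (SFM m n r A B C D)).prod =
      Matrix.fromBlocks ((l.map (FM m n A)).prod) 0 0 1 := by
  induction l with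
  | nil => simp [← Matrix.fromBlocks_one]
  | cons x t ih =>
    simp only [List.map_cons, List.prod_cons]
    rw [SFM_mid A B C D x (hl x (by simp)).1 (hl x (by simp)).2,
      ih (fun y hy => hl y (by simp [hy])), Matrix.fromBlocks_multiply]
    simp

lemma prod_S1 (hm : 2 ≤ m) (l : List ℕ) (hl : ∀ x ∈ l, 1 ≤ x ∧ x ≤ m) :
    (l.map (fun i => if i = m then SFM m n r A B C D m else (SFM m n r A B C D i)⁻¹)).prod =
    Matrix.fromBlocks
      ((l.map (fun i => if i = m then FM m n A m else (FM m n A i)⁻¹)).prod) 0 0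
      ((l.map (fun i => if i = m then (0 : Matrix (Fin r) (Fin r) ℂ) else 1)).prod) := by
  induction l with
  | nil => simp [← Matrix.fromBlocks_one]
  | cons x t ih =>
    simp only [List.map_cons, List.prod_cons]
    rw [ih (fun y hy => hl y (by simp [hy]))]
    by_cases hx : x = m
    · simp only [if_pos hx]
      rw [SFM_m A B C D (by omega), Matrix.fromBlocks_multiply]
      simp
    · simp only [if_neg hx]
      rw [SFM_inv A B C D x (hl x (by simp)).1 (lt_of_le_of_ne (hl x (by simp)).2 hx),
        Matrix.fromBlocks_multiply]
      simp

lemma hatS1_eq (hm : 2 ≤ m) (w1 : List ℕ) (hl : ∀ x ∈ w1, 1 ≤ x ∧ x ≤ m) (hmem : m ∈ w1) :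
    hatS1 m n r A B C D w1 = Matrix.fromBlocks (hatM1 m n A w1) 0 0 0 := by
  unfold hatS1 hatM1
  rw [prod_S1 A B C D hm w1 hl]
  have hz : (w1.map (fun i => if i = m then (0 : Matrix (Fin r) (Fin r) ℂ) else 1)).prod = 0 :=
    List.prod_eq_zero (List.mem_map.2 ⟨m, hmem, if_pos rfl⟩)
  rw [hz]

lemma hatM0_decomp (u v : List ℕ) :
    hatM0 m n A (u ++ 0 :: v) =
      (u.map (FM m n A)).prod * (FM m n A 0 * (v.map (FM m n A)).prod) := by
  unfold hatM0
  rw [List.map_append, List.prod_append, List.map_cons, List.prod_cons]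

lemma hatS0_decomp (u v : List ℕ) (hu : ∀ x ∈ u, 1 ≤ x ∧ x < m)
    (hv : ∀ x ∈ v, 1 ≤ x ∧ x < m) :
    hatS0 m n r A B C D (u ++ 0 :: v) = Matrix.fromBlocks
      (hatM0 m n A (u ++ 0 :: v))
      (-((u.map (FM m n A)).prod * eB m n r m B))
      (-(eC m n r m C * (v.map (FM m n A)).prod))
      (-D) := by
  unfold hatS0
  rw [List.map_append, List.prod_append, List.map_cons, List.prod_cons]
  rw [prod_diag A B C D u hu, prod_diag A B C D v hv, SFM_zero A B C D,
    Matrix.fromBlocks_multiply, Matrix.fromBlocks_multiply, hatM0_decomp]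
  simp [Matrix.neg_mul, Matrix.mul_neg]

lemma prod_eB_high (l : List ℕ) (hl : ∀ x ∈ l, 2 ≤ x ∧ x < m) :
    (l.map (FM m n A)).prod * eB m n r m B = eB m n r m B := by
  induction l with
  | nil => simp
  | cons x t ih =>
    rw [List.map_cons, List.prod_cons, Matrix.mul_assoc,
      ih (fun y hy => hl y (by simp [hy])),
      FM_mul_eB_high A B x (hl x (by simp)).1 (hl x (by simp)).2]

lemma eC_prod_high (l : List ℕ) (hl : ∀ x ∈ l, 2 ≤ x ∧ x < m) :
    eC m n r m C * (l.map (FM m n A)).prod = eC m n r m C := by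
  induction l with
  | nil => simp
  | cons x t ih =>
    rw [List.map_cons, List.prod_cons, ← Matrix.mul_assoc,
      eC_mul_FM_high A C x (hl x (by simp)).1 (hl x (by simp)).2,
      ih (fun y hy => hl y (by simp [hy]))]

lemma prod_row_zero (l : List ℕ) (hl : ∀ x ∈ l, 2 ≤ x ∧ x < m)
    (X : Matrix (Fin m × Fin n) (Fin r) ℂ) (hX : ∀ p q, (p.1 : ℕ) = m - 1 → X p q = 0) :
    ∀ p q, (p.1 : ℕ) = m - 1 → ((l.map (FM m n A)).prod * X) p q = 0 := by
  induction l with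
  | nil => intro p q hp; rw [List.map_nil, List.prod_nil, Matrix.one_mul]; exact hX p q hp
  | cons x t ih =>
    intro p q hp
    rw [List.map_cons, List.prod_cons, Matrix.mul_assoc,
      FM_row_pres A x (hl x (by simp)).1 (hl x (by simp)).2 _ p q hp]
    exact ih (fun y hy => hl y (by simp [hy])) p q hp

lemma prod_col_zero (l : List ℕ) (hl : ∀ x ∈ l, 2 ≤ x ∧ x < m)
    (Y : Matrix (Fin r) (Fin m × Fin n) ℂ) (hY : ∀ k p, (p.1 : ℕ) = m - 1 → Y k p = 0) :
    ∀ k p, (p.1 : ℕ) = m - 1 → (Y * (l.map (FM m n A)).prod) k p = 0 := by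
  induction l generalizing Y with
  | nil => intro k p hp; rw [List.map_nil, List.prod_nil, Matrix.mul_one]; exact hY k p hp
  | cons x t ih =>
    intro k p hp
    rw [List.map_cons, List.prod_cons, ← Matrix.mul_assoc]
    refine ih (fun y hy => hl y (by simp [hy])) (Y * FM m n A x) (fun k' p' hp' => ?_) k p hp
    rw [FM_col_pres A x (hl x (by simp)).1 (hl x (by simp)).2 Y k' p' hp']
    exact hY k' p' hp'

lemma eC_conjT : (eC m n r m Bᴴ)ᴴ = eB m n r m B := by
  ext p q
  rw [Matrix.conjTranspose_apply]
  simp [eC, eB, apply_ite (star : ℂ → ℂ)]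

end Sys

end Stmt9Aux

/-- if `G` is Hermitian (every `A_j` is Hermitian, `C = Bᴴ`, `D` Hermitian) and
`B ≠ 0`, then the PGF pencil `𝕂_w(λ)` of `G` is a Hermitian pencil iff the PGF pencil
`K_w(λ)` of `P` is a Hermitian pencil and `CIP(w0) = (0, 0)`; in that case
`𝕂_w(λ) = [[K_w(λ), e_m ⊗ B], [e_m^T ⊗ Bᴴ, D]]`. -/
theorem stmt9 (m n r : ℕ) (hm : 2 ≤ m) (hn : 1 ≤ n) (hr : 1 ≤ r)
    (A : Fin (m + 1) → Matrix (Fin n) (Fin n) ℂ) (hreg : Regular m n A)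
    (B : Matrix (Fin n) (Fin r) ℂ) (C : Matrix (Fin r) (Fin n) ℂ)
    (D : Matrix (Fin r) (Fin r) ℂ)
    (hA : ∀ j, (A j).IsHermitian) (hC : C = Bᴴ) (hD : D.IsHermitian) (hB : B ≠ 0)
    (w0 w1 : List ℕ) (hw : ProperPerm m w0 w1)
    (c0 i0 : ℕ) (hcip : IsCIP w0 c0 i0) :
    (((hatS1 m n r A B C D w1).IsHermitian ∧ (hatS0 m n r A B C D w0).IsHermitian) ↔
      ((hatM1 m n A w1).IsHermitian ∧ (hatM0 m n A w0).IsHermitian ∧ c0 = 0 ∧ i0 = 0)) ∧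
    (((hatS1 m n r A B C D w1).IsHermitian ∧ (hatS0 m n r A B C D w0).IsHermitian) →
      ∀ lam : ℂ,
        SKP m n r A B C D w0 w1 lam =
          Matrix.fromBlocks (KP m n A w0 w1 lam) (eB m n r m B) (eC m n r m Bᴴ) D) := by
  classical
  obtain ⟨hperm, h0w0, hmw1⟩ := hw
  have hnodup : (w0 ++ w1).Nodup := hperm.nodup_iff.mpr List.nodup_range
  rw [List.nodup_append] at hnodup
  obtain ⟨hnd0, hnd1, hdisj⟩ := hnodup
  have hmemall : ∀ x ∈ w0 ++ w1, x < m + 1 := fun x hx => List.mem_range.1 (hperm.mem_iff.1 hx)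
  have hmw0 : m ∉ w0 := fun h => hdisj _ h _ hmw1 rfl
  have h0w1 : (0 : ℕ) ∉ w1 := fun h => hdisj _ h0w0 _ h rfl
  have hw1elts : ∀ x ∈ w1, 1 ≤ x ∧ x ≤ m := by
    intro x hx
    refine ⟨?_, by have := hmemall x (List.mem_append_right _ hx); omega⟩
    rcases Nat.eq_zero_or_pos x with h | h
    · exact absurd (h ▸ hx) h0w1
    · exact h
  have hw0elts : ∀ x ∈ w0, x < m := by
    intro x hx
    have hlt := hmemall x (List.mem_append_left _ hx)
    rcases Nat.lt_or_ge x m with h | h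
    · exact h
    · exfalso
      have hxm : x = m := by omega
      exact hmw0 (hxm ▸ hx)
  have hS1eq : hatS1 m n r A B C D w1 = Matrix.fromBlocks (hatM1 m n A w1) 0 0 0 :=
    Stmt9Aux.hatS1_eq A B C D hm w1 hw1elts hmw1
  have hS1iff : (hatS1 m n r A B C D w1).IsHermitian ↔ (hatM1 m n A w1).IsHermitian := by
    rw [hS1eq, Matrix.isHermitian_fromBlocks_iff]
    simp [Matrix.isHermitian_zero]
  obtain ⟨u, v, huv⟩ := List.append_of_mem h0w0
  subst huv
  have hnd0' := hnd0
  rw [List.nodup_append] at hnd0'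
  obtain ⟨hndu, hndv', hduv⟩ := hnd0'
  have h0u : (0 : ℕ) ∉ u := fun h => hduv _ h _ List.mem_cons_self rfl
  have h0v : (0 : ℕ) ∉ v := (List.nodup_cons.1 hndv').1
  have huelts : ∀ x ∈ u, 1 ≤ x ∧ x < m := by
    intro x hx
    refine ⟨?_, hw0elts x (List.mem_append_left _ hx)⟩
    rcases Nat.eq_zero_or_pos x with h | h
    · exact absurd (h ▸ hx) h0u
    · exact h
  have hvelts : ∀ x ∈ v, 1 ≤ x ∧ x < m := by
    intro x hx
    refine ⟨?_, hw0elts x (List.mem_append_right _ (List.mem_cons_of_mem _ hx))⟩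
    rcases Nat.eq_zero_or_pos x with h | h
    · exact absurd (h ▸ hx) h0v
    · exact h
  have hcip00 : (c0 = 0 ∧ i0 = 0) ↔ (1 : ℕ) ∉ u ++ 0 :: v := by
    constructor
    · rintro ⟨hc, hi⟩ h1w0
      subst hc; subst hi
      have hncons := hcip.1.2
      have hninv := hcip.2.2
      have hne : (u ++ 0 :: v).idxOf 0 ≠ (u ++ 0 :: v).idxOf 1 := fun h =>
        absurd ((List.idxOf_inj h0w0).1 h) (by omega)
      rcases Nat.lt_or_ge ((u ++ 0 :: v).idxOf 0) ((u ++ 0 :: v).idxOf 1) with h | h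
      · refine hncons ⟨h0w0, h1w0, ?_⟩
        simpa using h
      · refine hninv ⟨h0w0, h1w0, ?_⟩
        simp only [Nat.zero_add]
        omega
    · intro h1w0
      constructor
      · by_contra hc
        exact h1w0 (hcip.1.1 0 (by omega)).2.1
      · by_contra hi
        exact h1w0 (hcip.2.1 0 (by omega)).2.1
  have hS0d := Stmt9Aux.hatS0_decomp A B C D u v huelts hvelts
  by_cases h1w0 : (1 : ℕ) ∈ u ++ 0 :: v
  · -- 1 appears in w0 : the system pencil is never Hermitian
    obtain ⟨x0, k0, hBx⟩ : ∃ x k, B x k ≠ 0 := by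
      by_contra h
      push_neg at h
      exact hB (by ext i j; exact h i j)
    have hpmv : ((((⟨m - 1, by omega⟩ : Fin m), x0) : Fin m × Fin n).1 : ℕ) = m - 1 := rfl
    have hnotH : ¬ (hatS0 m n r A B C D (u ++ 0 :: v)).IsHermitian := by
      intro hH
      have hE := hH.apply (Sum.inl ((⟨m - 1, by omega⟩ : Fin m), x0)) (Sum.inr k0)
      rw [hS0d, Matrix.fromBlocks_apply₂₁, Matrix.fromBlocks_apply₁₂] at hE
      have h1cases : (1 : ℕ) ∈ u ∨ (1 : ℕ) ∈ v := by
        rcases List.mem_append.1 h1w0 with h | h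
        · exact Or.inl h
        · rcases List.mem_cons.1 h with h | h
          · exact absurd h (by omega)
          · exact Or.inr h
      rcases h1cases with h1u | h1v
      · -- inversion at 0
        obtain ⟨a, b, hab⟩ := List.append_of_mem h1u
        have hnd' := hndu
        rw [hab, List.nodup_append] at hnd'
        obtain ⟨hnda, hndb', hdab⟩ := hnd'
        have h1a : (1 : ℕ) ∉ a := fun h => hdab _ h _ List.mem_cons_self rfl
        have h1b : (1 : ℕ) ∉ b := (List.nodup_cons.1 hndb').1
        have h1v' : (1 : ℕ) ∉ v := fun h => hduv _ h1u _ (List.mem_cons_of_mem _ h) rfl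
        have haelts : ∀ x ∈ a, 2 ≤ x ∧ x < m := by
          intro x hx
          have hxu : x ∈ u := hab ▸ List.mem_append_left _ hx
          have h' := huelts x hxu
          have : x ≠ 1 := fun he => h1a (he ▸ hx)
          exact ⟨by omega, h'.2⟩
        have hbelts : ∀ x ∈ b, 2 ≤ x ∧ x < m := by
          intro x hx
          have hxu : x ∈ u := hab ▸ List.mem_append_right _ (List.mem_cons_of_mem _ hx)
          have h' := huelts x hxu
          have : x ≠ 1 := fun he => h1b (he ▸ hx)
          exact ⟨by omega, h'.2⟩
        have hvelts2 : ∀ x ∈ v, 2 ≤ x ∧ x < m := by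
          intro x hx
          have h' := hvelts x hx
          have : x ≠ 1 := fun he => h1v' (he ▸ hx)
          exact ⟨by omega, h'.2⟩
        have hTRzero : ((u.map (FM m n A)).prod * eB m n r m B)
            ((⟨m - 1, by omega⟩ : Fin m), x0) k0 = 0 := by
          rw [hab, List.map_append, List.prod_append, List.map_cons, List.prod_cons,
            Matrix.mul_assoc, Matrix.mul_assoc,
            Stmt9Aux.prod_eB_high A B b hbelts, Stmt9Aux.FM1_mul_eB A B hm]
          refine Stmt9Aux.prod_row_zero A a haelts _ (fun p' q' hp' => ?_) _ _ hpmv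
          simp only [eB, Matrix.of_apply, hp']
          rw [if_neg (by omega)]
        rw [Stmt9Aux.eC_prod_high A C v hvelts2] at hE
        rw [Matrix.neg_apply, Matrix.neg_apply, hTRzero] at hE
        have heC : eC m n r m C k0 ((⟨m - 1, by omega⟩ : Fin m), x0) = C k0 x0 := by
          simp only [eC, Matrix.of_apply, hpmv]
          rw [if_pos (by omega)]
        rw [heC, hC, Matrix.conjTranspose_apply] at hE
        simp only [star_neg, star_star, neg_zero] at hE
        exact hBx (neg_eq_zero.1 hE)
      · -- consecution at 0
        obtain ⟨a, b, hab⟩ := List.append_of_mem h1v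
        have hnd' := (List.nodup_cons.1 hndv').2
        rw [hab, List.nodup_append] at hnd'
        obtain ⟨hnda, hndb', hdab⟩ := hnd'
        have h1a : (1 : ℕ) ∉ a := fun h => hdab _ h _ List.mem_cons_self rfl
        have h1b : (1 : ℕ) ∉ b := (List.nodup_cons.1 hndb').1
        have h1u' : (1 : ℕ) ∉ u := fun h => hduv _ h _ (List.mem_cons_of_mem _ h1v) rfl
        have haelts : ∀ x ∈ a, 2 ≤ x ∧ x < m := by
          intro x hx
          have hxv : x ∈ v := hab ▸ List.mem_append_left _ hx
          have h' := hvelts x hxv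
          have : x ≠ 1 := fun he => h1a (he ▸ hx)
          exact ⟨by omega, h'.2⟩
        have hbelts : ∀ x ∈ b, 2 ≤ x ∧ x < m := by
          intro x hx
          have hxv : x ∈ v := hab ▸ List.mem_append_right _ (List.mem_cons_of_mem _ hx)
          have h' := hvelts x hxv
          have : x ≠ 1 := fun he => h1b (he ▸ hx)
          exact ⟨by omega, h'.2⟩
        have huelts2 : ∀ x ∈ u, 2 ≤ x ∧ x < m := by
          intro x hx
          have h' := huelts x hx
          have : x ≠ 1 := fun he => h1u' (he ▸ hx)
          exact ⟨by omega, h'.2⟩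
        have hBLzero : (eC m n r m C * (v.map (FM m n A)).prod)
            k0 ((⟨m - 1, by omega⟩ : Fin m), x0) = 0 := by
          rw [hab, List.map_append, List.prod_append, List.map_cons, List.prod_cons,
            ← Matrix.mul_assoc, Stmt9Aux.eC_prod_high A C a haelts,
            ← Matrix.mul_assoc, Stmt9Aux.eC_mul_FM1 A C hm]
          refine Stmt9Aux.prod_col_zero A b hbelts _ (fun k' p' hp' => ?_) _ _ hpmv
          simp only [eC, Matrix.of_apply, hp']
          rw [if_neg (by omega)]
        rw [Stmt9Aux.prod_eB_high A B u huelts2] at hE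
        rw [Matrix.neg_apply, Matrix.neg_apply, hBLzero] at hE
        have heB : eB m n r m B ((⟨m - 1, by omega⟩ : Fin m), x0) k0 = B x0 k0 := by
          simp only [eB, Matrix.of_apply, hpmv]
          rw [if_pos (by omega)]
        rw [heB] at hE
        simp only [star_neg, star_zero, neg_zero] at hE
        exact hBx (by rw [← neg_eq_zero]; exact hE.symm)
    refine ⟨⟨fun hh => absurd hh.2 hnotH, fun hh => absurd h1w0 (hcip00.1 ⟨hh.2.2.1, hh.2.2.2⟩)⟩,
      fun hh => absurd hh.2 hnotH⟩
  · -- 1 does not appear in w0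
    have h1u : (1 : ℕ) ∉ u := fun h => h1w0 (List.mem_append_left _ h)
    have h1v : (1 : ℕ) ∉ v := fun h => h1w0 (List.mem_append_right _ (List.mem_cons_of_mem _ h))
    have huelts2 : ∀ x ∈ u, 2 ≤ x ∧ x < m := by
      intro x hx
      have h' := huelts x hx
      have : x ≠ 1 := fun he => h1u (he ▸ hx)
      exact ⟨by omega, h'.2⟩
    have hvelts2 : ∀ x ∈ v, 2 ≤ x ∧ x < m := by
      intro x hx
      have h' := hvelts x hx
      have : x ≠ 1 := fun he => h1v (he ▸ hx)
      exact ⟨by omega, h'.2⟩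
    have hS0d' : hatS0 m n r A B C D (u ++ 0 :: v) = Matrix.fromBlocks
        (hatM0 m n A (u ++ 0 :: v)) (-(eB m n r m B)) (-(eC m n r m C)) (-D) := by
      rw [hS0d, Stmt9Aux.prod_eB_high A B u huelts2, Stmt9Aux.eC_prod_high A C v hvelts2]
    have hBt : (eB m n r m B)ᴴ = eC m n r m Bᴴ := by
      conv_lhs => rw [← Stmt9Aux.eC_conjT B]
      rw [Matrix.conjTranspose_conjTranspose]
    have hS0iff : (hatS0 m n r A B C D (u ++ 0 :: v)).IsHermitian ↔
        (hatM0 m n A (u ++ 0 :: v)).IsHermitian := by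
      rw [hS0d', Matrix.isHermitian_fromBlocks_iff]
      constructor
      · exact fun h => h.1
      · intro h
        refine ⟨h, ?_, ?_, hD.neg⟩
        · rw [Matrix.conjTranspose_neg, hBt, hC]
        · rw [hC, Matrix.conjTranspose_neg, Stmt9Aux.eC_conjT B]
    constructor
    · constructor
      · rintro ⟨hS1, hS0⟩
        exact ⟨hS1iff.1 hS1, hS0iff.1 hS0, (hcip00.2 h1w0).1, (hcip00.2 h1w0).2⟩
      · rintro ⟨hM1, hM0, _, _⟩
        exact ⟨hS1iff.2 hM1, hS0iff.2 hM0⟩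
    · rintro ⟨hS1, hS0⟩ lam
      unfold SKP KP
      rw [hS1eq, hS0d']
      rw [Matrix.fromBlocks_smul, sub_eq_add_neg, Matrix.fromBlocks_neg,
        Matrix.fromBlocks_add]
      simp [sub_eq_add_neg, hC]

end
end

section
/- Suppose m is odd and the transfer function G is Hermitian, i.e. every A_j is Hermitian, C = B^*, and D is Hermitian. Then the PGF pencil 𝕂(λ) = λ 𝕄_m 𝕄_{m−2}^{-1} ⋯ 𝕄_3^{-1} 𝕄_1^{-1} − 𝕄_0 𝕄_2 ⋯ 𝕄_{m−3} 𝕄_{m−1} of G is a Hermitian pencil; that is, both the matrix 𝕄_m 𝕄_{m−2}^{-1} ⋯ 𝕄_3^{-1} 𝕄_1^{-1} and the matrix 𝕄_0 𝕄_2 ⋯ 𝕄_{m−3} 𝕄_{m−1} are Hermitian. -/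
open Matrix
open Fin.NatCast

noncomputable section

namespace S10

/-- A block matrix built from an `m × m` array of `n × n` blocks. -/
def bmat (m n : ℕ) (f : Fin m → Fin m → Matrix (Fin n) (Fin n) ℂ) :
    Matrix (Fin m × Fin n) (Fin m × Fin n) ℂ :=
  Matrix.of fun p q => f p.1 q.1 p.2 q.2

theorem bmat_mul (m n : ℕ) (f g : Fin m → Fin m → Matrix (Fin n) (Fin n) ℂ) :
    bmat m n f * bmat m n g = bmat m n (fun i k => ∑ j, f i j * g j k) := by
  ext ⟨p1, p2⟩ ⟨q1, q2⟩
  simp [bmat, Matrix.mul_apply, Fintype.sum_prod_type, Matrix.sum_apply]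

theorem bmat_one (m n : ℕ) :
    bmat m n (fun i j => if i = j then 1 else 0) = 1 := by
  ext ⟨p1, p2⟩ ⟨q1, q2⟩
  simp only [bmat, Matrix.of_apply, Matrix.one_apply, Prod.mk.injEq]
  split_ifs with h1 h2 h2 <;> simp_all [Matrix.one_apply]

theorem bmat_herm (m n : ℕ) (f : Fin m → Fin m → Matrix (Fin n) (Fin n) ℂ)
    (h : ∀ i j, (f j i)ᴴ = f i j) : (bmat m n f).IsHermitian := by
  show _ = _
  ext ⟨p1, p2⟩ ⟨q1, q2⟩
  have := congrFun (congrFun (h p1 q1) p2) q2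
  simpa [bmat, Matrix.conjTranspose_apply] using this

/-- `M` agrees with the identity outside the block rows/columns in `S`. -/
def OffId (m n : ℕ) (S : ℕ → Prop)
    (M : Matrix (Fin m × Fin n) (Fin m × Fin n) ℂ) : Prop :=
  ∀ p q : Fin m × Fin n, (¬ S (p.1 : ℕ) ∨ ¬ S (q.1 : ℕ)) →
    M p q = (1 : Matrix (Fin m × Fin n) (Fin m × Fin n) ℂ) p q

theorem offId_sub_mul {m n : ℕ} {S T : ℕ → Prop}
    {M N : Matrix (Fin m × Fin n) (Fin m × Fin n) ℂ}
    (hM : OffId m n S M) (hN : OffId m n T N) (hST : ∀ x, ¬(S x ∧ T x)) :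
    (M - 1) * (N - 1) = 0 := by
  ext p q
  rw [Matrix.mul_apply]
  refine Finset.sum_eq_zero fun y _ => ?_
  by_cases hy : S (y.1 : ℕ)
  · have h2 : ¬ T (y.1 : ℕ) := fun ht => hST _ ⟨hy, ht⟩
    have := hN y q (Or.inl h2)
    simp [Matrix.sub_apply, this]
  · have := hM p y (Or.inr hy)
    simp [Matrix.sub_apply, this]

theorem offId_mul_eq {m n : ℕ} {S T : ℕ → Prop}
    {M N : Matrix (Fin m × Fin n) (Fin m × Fin n) ℂ}
    (hM : OffId m n S M) (hN : OffId m n T N) (hST : ∀ x, ¬(S x ∧ T x)) :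
    M * N = M + N - 1 := by
  have h0 := offId_sub_mul hM hN hST
  have hexp : (M - 1) * (N - 1) = M * N - M - N + 1 := by noncomm_ring
  rw [hexp] at h0
  calc M * N = (M * N - M - N + 1) + (M + N - 1) := by abel
  _ = M + N - 1 := by rw [h0]; abel

theorem offId_commute {m n : ℕ} {S T : ℕ → Prop}
    {M N : Matrix (Fin m × Fin n) (Fin m × Fin n) ℂ}
    (hM : OffId m n S M) (hN : OffId m n T N) (hST : ∀ x, ¬(S x ∧ T x)) :
    Commute M N := by
  show M * N = N * M
  rw [offId_mul_eq hM hN hST, offId_mul_eq hN hM (fun x hx => hST x ⟨hx.2, hx.1⟩)]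
  abel

theorem offId_mul_right {m n : ℕ} {S : ℕ → Prop} {ι : Type*} [Fintype ι]
    {M : Matrix (Fin m × Fin n) (Fin m × Fin n) ℂ}
    (hM : OffId m n S M) (E : Matrix (Fin m × Fin n) ι ℂ)
    (hE : ∀ (y : Fin m × Fin n) (c : ι), S (y.1 : ℕ) → E y c = 0) :
    M * E = E := by
  have h0 : (M - 1) * E = 0 := by
    ext p c
    rw [Matrix.mul_apply]
    refine Finset.sum_eq_zero fun y _ => ?_
    by_cases hy : S (y.1 : ℕ)
    · simp [hE y c hy]
    · have := hM p y (Or.inr hy)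
      simp [Matrix.sub_apply, this]
  rw [Matrix.sub_mul, Matrix.one_mul] at h0
  exact sub_eq_zero.mp h0

theorem offId_mul_left {m n : ℕ} {S : ℕ → Prop} {ι : Type*} [Fintype ι]
    {M : Matrix (Fin m × Fin n) (Fin m × Fin n) ℂ}
    (hM : OffId m n S M) (E : Matrix ι (Fin m × Fin n) ℂ)
    (hE : ∀ (c : ι) (y : Fin m × Fin n), S (y.1 : ℕ) → E c y = 0) :
    E * M = E := by
  have h0 : E * (M - 1) = 0 := by
    ext c q
    rw [Matrix.mul_apply]
    refine Finset.sum_eq_zero fun y _ => ?_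
    by_cases hy : S (y.1 : ℕ)
    · simp [hE c y hy]
    · have := hM y q (Or.inl hy)
      simp [Matrix.sub_apply, this]
  rw [Matrix.mul_sub, Matrix.mul_one] at h0
  exact sub_eq_zero.mp h0

theorem herm_prod {ι : Type*} [Fintype ι] [DecidableEq ι]
    (l : List (Matrix ι ι ℂ)) (hc : l.Pairwise Commute)
    (hh : ∀ X ∈ l, X.IsHermitian) : l.prod.IsHermitian := by
  induction l with
  | nil => simpa using Matrix.isHermitian_one
  | cons a l ih =>
    rw [List.prod_cons]
    obtain ⟨h1, h2⟩ := List.pairwise_cons.mp hc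
    have hcom : Commute a l.prod := Commute.list_prod_right _ _ h1
    have ha := hh a (by simp)
    have hl := ih h2 (fun X hX => hh X (by simp [hX]))
    show (a * l.prod)ᴴ = a * l.prod
    rw [Matrix.conjTranspose_mul, hl, ha]
    exact hcom.symm.eq

end S10

namespace S10

theorem sum_two {α β : Type*} [Fintype α] [DecidableEq α] [AddCommMonoid β] {f : α → β}
    (a b : α) (hab : a ≠ b) (h : ∀ c, c ≠ a → c ≠ b → f c = 0) :
    ∑ c, f c = f a + f b := by
  have hs := Finset.sum_subset (Finset.subset_univ ({a, b} : Finset α))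
    (fun c _ hc => h c (fun h' => hc (by simp [h'])) (fun h' => hc (by simp [h'])))
  rw [← hs, Finset.sum_pair hab]

/-- Block function for the middle Fiedler matrices. -/
def fmf (m n : ℕ) (A : Fin (m + 1) → Matrix (Fin n) (Fin n) ℂ) (i : ℕ) :
    Fin m → Fin m → Matrix (Fin n) (Fin n) ℂ := fun b c =>
  if (b : ℕ) = m - i - 1 ∧ (c : ℕ) = m - i - 1 then -A (i : Fin (m + 1))
  else if (b : ℕ) = m - i - 1 ∧ (c : ℕ) = m - i then 1
  else if (b : ℕ) = m - i ∧ (c : ℕ) = m - i - 1 then 1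
  else if (b : ℕ) = m - i ∧ (c : ℕ) = m - i then 0
  else if b = c then 1 else 0

/-- Block function for the explicit inverse of a middle Fiedler matrix. -/
def gmf (m n : ℕ) (A : Fin (m + 1) → Matrix (Fin n) (Fin n) ℂ) (i : ℕ) :
    Fin m → Fin m → Matrix (Fin n) (Fin n) ℂ := fun b c =>
  if (b : ℕ) = m - i - 1 ∧ (c : ℕ) = m - i - 1 then 0
  else if (b : ℕ) = m - i - 1 ∧ (c : ℕ) = m - i then 1
  else if (b : ℕ) = m - i ∧ (c : ℕ) = m - i - 1 then 1
  else if (b : ℕ) = m - i ∧ (c : ℕ) = m - i then A (i : Fin (m + 1))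
  else if b = c then 1 else 0

/-- Explicit inverse of a middle Fiedler matrix. -/
def GM (m n : ℕ) (A : Fin (m + 1) → Matrix (Fin n) (Fin n) ℂ) (i : ℕ) :
    Matrix (Fin m × Fin n) (Fin m × Fin n) ℂ := bmat m n (gmf m n A i)

theorem FM_mid_eq {m n : ℕ} {A : Fin (m + 1) → Matrix (Fin n) (Fin n) ℂ} {i : ℕ}
    (h1 : i ≠ 0) (h2 : i ≠ m) : FM m n A i = bmat m n (fmf m n A i) := by
  ext p q
  simp [FM, bmat, fmf, h1, h2]

set_option maxHeartbeats 1600000 in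
theorem FM_mul_GM {m n : ℕ} {A : Fin (m + 1) → Matrix (Fin n) (Fin n) ℂ} {i : ℕ}
    (h1 : 1 ≤ i) (h2 : i < m) : FM m n A i * GM m n A i = 1 := by
  rw [FM_mid_eq (by omega) (by omega), GM, bmat_mul, ← bmat_one m n]
  refine congrArg (bmat m n) (funext fun b => funext fun k => ?_)
  have hA0 : m - i - 1 < m := by omega
  have hA1 : m - i - 1 + 1 < m := by omega
  set B0 : Fin m := ⟨m - i - 1, hA0⟩ with hB0
  set B1 : Fin m := ⟨m - i - 1 + 1, hA1⟩ with hB1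
  have hv0 : (B0 : ℕ) = m - i - 1 := rfl
  have hv1 : (B1 : ℕ) = m - i - 1 + 1 := rfl
  have hne : B0 ≠ B1 := Fin.ne_of_val_ne (by omega)
  have hvan : (b : ℕ) = m - i - 1 ∨ (b : ℕ) = m - i →
      ∀ c : Fin m, c ≠ B0 → c ≠ B1 → fmf m n A i b c * gmf m n A i c k = 0 := by
    intro hbor c hc0 hc1
    have h0 : (c : ℕ) ≠ m - i - 1 := fun hh => hc0 (Fin.ext (by omega))
    have h1' : (c : ℕ) ≠ m - i - 1 + 1 := fun hh => hc1 (Fin.ext (by omega))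
    have : fmf m n A i b c = 0 := by
      unfold fmf
      split_ifs with g1 g2 g3 g4 g5 <;>
        first | rfl | (exfalso; omega) | (exfalso; rw [Fin.ext_iff] at g5; omega)
    rw [this, zero_mul]
  by_cases hb : (b : ℕ) = m - i - 1
  · rw [sum_two B0 B1 hne (hvan (Or.inl hb))]
    have e1 : fmf m n A i b B0 = -A (i : Fin (m + 1)) := by
      unfold fmf; split_ifs <;> first | rfl | (exfalso; omega)
    have e2 : fmf m n A i b B1 = 1 := by
      unfold fmf; split_ifs <;> first | rfl | (exfalso; omega)
    rw [e1, e2, one_mul]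
    by_cases hk : (k : ℕ) = m - i - 1
    · have g1 : gmf m n A i B0 k = 0 := by
        unfold gmf; split_ifs <;> first | rfl | (exfalso; omega)
      have g2 : gmf m n A i B1 k = 1 := by
        unfold gmf; split_ifs <;> first | rfl | (exfalso; omega)
      rw [g1, g2, mul_zero, zero_add, if_pos (Fin.ext (by omega))]
    · by_cases hk1 : (k : ℕ) = m - i
      · have g1 : gmf m n A i B0 k = 1 := by
          unfold gmf; split_ifs <;> first | rfl | (exfalso; omega)
        have g2 : gmf m n A i B1 k = A (i : Fin (m + 1)) := by
          unfold gmf; split_ifs <;> first | rfl | (exfalso; omega)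
        rw [g1, g2, mul_one, if_neg (Fin.ne_of_val_ne (by omega))]
        abel
      · have g1 : gmf m n A i B0 k = 0 := by
          unfold gmf
          split_ifs with w1 w2 w3 w4 w5 <;>
            first | rfl | (exfalso; omega) | (exfalso; rw [Fin.ext_iff] at w5; omega)
        have g2 : gmf m n A i B1 k = 0 := by
          unfold gmf
          split_ifs with w1 w2 w3 w4 w5 <;>
            first | rfl | (exfalso; omega) | (exfalso; rw [Fin.ext_iff] at w5; omega)
        rw [g1, g2, mul_zero, add_zero, if_neg (Fin.ne_of_val_ne (by omega))]
  · by_cases hb1 : (b : ℕ) = m - i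
    · rw [sum_two B0 B1 hne (hvan (Or.inr hb1))]
      have e1 : fmf m n A i b B0 = 1 := by
        unfold fmf; split_ifs <;> first | rfl | (exfalso; omega)
      have e2 : fmf m n A i b B1 = 0 := by
        unfold fmf; split_ifs <;> first | rfl | (exfalso; omega)
      rw [e1, e2, one_mul, zero_mul, add_zero]
      by_cases hk : (k : ℕ) = m - i - 1
      · have g1 : gmf m n A i B0 k = 0 := by
          unfold gmf; split_ifs <;> first | rfl | (exfalso; omega)
        rw [g1, if_neg (Fin.ne_of_val_ne (by omega))]
      · by_cases hk1 : (k : ℕ) = m - i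
        · have g1 : gmf m n A i B0 k = 1 := by
            unfold gmf; split_ifs <;> first | rfl | (exfalso; omega)
          rw [g1, if_pos (Fin.ext (by omega))]
        · have g1 : gmf m n A i B0 k = 0 := by
            unfold gmf
            split_ifs with w1 w2 w3 w4 w5 <;>
              first | rfl | (exfalso; omega) | (exfalso; rw [Fin.ext_iff] at w5; omega)
          rw [g1, if_neg (Fin.ne_of_val_ne (by omega))]
    · rw [Fintype.sum_eq_single b
        (fun c hc => by
          have : fmf m n A i b c = 0 := by
            unfold fmf
            split_ifs with g1 g2 g3 g4 g5 <;>
              first | rfl | (exfalso; omega) | (exact absurd g5.symm hc)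
          rw [this, zero_mul])]
      have e1 : fmf m n A i b b = 1 := by
        unfold fmf
        split_ifs with g1 g2 g3 g4 g5 <;>
          first | rfl | (exfalso; omega) | (exact absurd rfl g5)
      rw [e1, one_mul]
      unfold gmf
      split_ifs with g1 g2 g3 g4 <;> first | rfl | (exfalso; omega)

theorem GM_mul_FM {m n : ℕ} {A : Fin (m + 1) → Matrix (Fin n) (Fin n) ℂ} {i : ℕ}
    (h1 : 1 ≤ i) (h2 : i < m) : GM m n A i * FM m n A i = 1 :=
  mul_eq_one_comm.mp (FM_mul_GM h1 h2)

end S10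

namespace S10

theorem offId_FM0 {m n : ℕ} {A : Fin (m + 1) → Matrix (Fin n) (Fin n) ℂ} :
    OffId m n (fun x => x = m - 1) (FM m n A 0) := by
  rintro ⟨p1, p2⟩ ⟨q1, q2⟩ h
  simp only [FM, Matrix.of_apply, if_pos rfl, Matrix.one_apply, Prod.mk.injEq]
  split_ifs with h1 h2 h3 h3 <;>
    simp_all [Matrix.one_apply, Fin.ext_iff] <;> omega

theorem offId_FMm {m n : ℕ} {A : Fin (m + 1) → Matrix (Fin n) (Fin n) ℂ} (hm : m ≠ 0) :
    OffId m n (fun x => x = 0) (FM m n A m) := by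
  rintro ⟨p1, p2⟩ ⟨q1, q2⟩ h
  simp only [FM, Matrix.of_apply, if_neg hm, if_pos rfl, Matrix.one_apply, Prod.mk.injEq]
  split_ifs with h1 h2 h3 h3 <;>
    simp_all [Matrix.one_apply, Fin.ext_iff] <;> omega

theorem offId_FMmid {m n : ℕ} {A : Fin (m + 1) → Matrix (Fin n) (Fin n) ℂ} {i : ℕ}
    (h1 : i ≠ 0) (h2 : i ≠ m) :
    OffId m n (fun x => x = m - i - 1 ∨ x = m - i) (FM m n A i) := by
  rintro ⟨p1, p2⟩ ⟨q1, q2⟩ h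
  rw [FM_mid_eq h1 h2]
  simp only [bmat, fmf, Matrix.of_apply, Matrix.one_apply, Prod.mk.injEq]
  split_ifs with g1 g2 g3 g4 g5 g6 g6 <;>
    simp_all [Matrix.one_apply, Fin.ext_iff] <;> omega

theorem offId_GM {m n : ℕ} {A : Fin (m + 1) → Matrix (Fin n) (Fin n) ℂ} {i : ℕ} :
    OffId m n (fun x => x = m - i - 1 ∨ x = m - i) (GM m n A i) := by
  rintro ⟨p1, p2⟩ ⟨q1, q2⟩ h
  simp only [GM, bmat, gmf, Matrix.of_apply, Matrix.one_apply, Prod.mk.injEq]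
  split_ifs with g1 g2 g3 g4 g5 g6 g6 <;>
    simp_all [Matrix.one_apply, Fin.ext_iff] <;> omega

theorem herm_FM0 {m n : ℕ} {A : Fin (m + 1) → Matrix (Fin n) (Fin n) ℂ}
    (hA : (A 0).IsHermitian) : (FM m n A 0).IsHermitian := by
  have h : FM m n A 0 = bmat m n (fun b c =>
      if b = c then (if (b : ℕ) = m - 1 then -A 0 else 1) else 0) := rfl
  rw [h]
  apply bmat_herm
  intro b c
  by_cases hbc : b = c
  · subst hbc
    by_cases h2 : (b : ℕ) = m - 1 <;>
      simp [h2, Matrix.conjTranspose_neg, hA.eq]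
  · rw [if_neg hbc, if_neg (fun hh => hbc hh.symm), Matrix.conjTranspose_zero]

theorem herm_FMm {m n : ℕ} {A : Fin (m + 1) → Matrix (Fin n) (Fin n) ℂ} (hm : m ≠ 0)
    (hA : (A ((m : ℕ) : Fin (m + 1))).IsHermitian) : (FM m n A m).IsHermitian := by
  have h : FM m n A m = bmat m n (fun b c =>
      if b = c then (if (b : ℕ) = 0 then A ((m : ℕ) : Fin (m + 1)) else 1) else 0) := by
    ext p q
    simp [FM, bmat, hm]
  rw [h]
  apply bmat_herm
  intro b c
  by_cases hbc : b = c
  · subst hbc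
    by_cases h2 : (b : ℕ) = 0 <;> simp [h2, ← Fin.natCast_eq_last, hA.eq]
  · rw [if_neg hbc, if_neg (fun hh => hbc hh.symm), Matrix.conjTranspose_zero]

theorem fmf_symm {m n : ℕ} {A : Fin (m + 1) → Matrix (Fin n) (Fin n) ℂ} {i : ℕ}
    (h1 : 1 ≤ i) (h2 : i < m) (b c : Fin m) :
    fmf m n A i c b = fmf m n A i b c := by
  unfold fmf
  split_ifs with g1 g2 g3 g4 g5 <;>
    first
      | rfl
      | (exfalso; omega)
      | (exfalso; rw [Fin.ext_iff] at *; omega)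
      | (simp_all [eq_comm])

theorem gmf_symm {m n : ℕ} {A : Fin (m + 1) → Matrix (Fin n) (Fin n) ℂ} {i : ℕ}
    (h1 : 1 ≤ i) (h2 : i < m) (b c : Fin m) :
    gmf m n A i c b = gmf m n A i b c := by
  unfold gmf
  split_ifs with g1 g2 g3 g4 g5 <;>
    first
      | rfl
      | (exfalso; omega)
      | (exfalso; rw [Fin.ext_iff] at *; omega)
      | (simp_all [eq_comm])

theorem herm_FMmid {m n : ℕ} {A : Fin (m + 1) → Matrix (Fin n) (Fin n) ℂ} {i : ℕ}
    (h1 : 1 ≤ i) (h2 : i < m) (hA : ∀ j, (A j).IsHermitian) :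
    (FM m n A i).IsHermitian := by
  rw [FM_mid_eq (by omega) (by omega)]
  apply bmat_herm
  intro b c
  rw [fmf_symm h1 h2]
  unfold fmf
  split_ifs <;>
    simp [Matrix.conjTranspose_neg, (hA _).eq]

theorem herm_GM {m n : ℕ} {A : Fin (m + 1) → Matrix (Fin n) (Fin n) ℂ} {i : ℕ}
    (h1 : 1 ≤ i) (h2 : i < m) (hA : ∀ j, (A j).IsHermitian) :
    (GM m n A i).IsHermitian := by
  apply bmat_herm
  intro b c
  rw [gmf_symm h1 h2]
  unfold gmf
  split_ifs <;>
    simp [(hA _).eq]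

theorem eB_conj {m n r : ℕ} (j : ℕ) (B : Matrix (Fin n) (Fin r) ℂ) :
    (eB m n r j B)ᴴ = eC m n r j Bᴴ := by
  ext c p
  simp only [eB, eC, Matrix.conjTranspose_apply, Matrix.of_apply, apply_ite star, star_zero]
  try rfl

theorem eC_conj {m n r : ℕ} (j : ℕ) (C : Matrix (Fin r) (Fin n) ℂ) :
    (eC m n r j C)ᴴ = eB m n r j Cᴴ := by
  ext p c
  simp only [eB, eC, Matrix.conjTranspose_apply, Matrix.of_apply, apply_ite star, star_zero]
  try rfl

theorem eB_supp {m n r : ℕ} {B : Matrix (Fin n) (Fin r) ℂ} (y : Fin m × Fin n) (c : Fin r)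
    (hy : (y.1 : ℕ) ≠ m - 1) : eB m n r m B y c = 0 := by
  have h2 : (y.1 : ℕ) < m := y.1.isLt
  simp only [eB, Matrix.of_apply]
  rw [if_neg (by omega)]

theorem eC_supp {m n r : ℕ} {C : Matrix (Fin r) (Fin n) ℂ} (c : Fin r) (y : Fin m × Fin n)
    (hy : (y.1 : ℕ) ≠ m - 1) : eC m n r m C c y = 0 := by
  have h2 : (y.1 : ℕ) < m := y.1.isLt
  simp only [eC, Matrix.of_apply]
  rw [if_neg (by omega)]

end S10

namespace S10

variable {m n r : ℕ} {A : Fin (m + 1) → Matrix (Fin n) (Fin n) ℂ}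
  {B : Matrix (Fin n) (Fin r) ℂ} {C : Matrix (Fin r) (Fin n) ℂ} {D : Matrix (Fin r) (Fin r) ℂ}

/-- Explicit inverse of a middle system Fiedler matrix. -/
def SG (m n r : ℕ) (A : Fin (m + 1) → Matrix (Fin n) (Fin n) ℂ) (i : ℕ) :
    Matrix ((Fin m × Fin n) ⊕ Fin r) ((Fin m × Fin n) ⊕ Fin r) ℂ :=
  Matrix.fromBlocks (GM m n A i) 0 0 (1 : Matrix (Fin r) (Fin r) ℂ)

theorem SFM_zero : SFM m n r A B C D 0 =
    Matrix.fromBlocks (FM m n A 0) (-(eB m n r m B)) (-(eC m n r m C)) (-D) := by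
  simp [SFM]

theorem SFM_m (hm : m ≠ 0) : SFM m n r A B C D m =
    Matrix.fromBlocks (FM m n A m) 0 0 0 := by
  simp [SFM, hm]

theorem SFM_mid {i : ℕ} (h1 : i ≠ 0) (h2 : i ≠ m) : SFM m n r A B C D i =
    Matrix.fromBlocks (FM m n A i) 0 0 1 := by
  simp [SFM, h1, h2]

theorem SFM_inv_eq {i : ℕ} (h1 : 1 ≤ i) (h2 : i < m) :
    (SFM m n r A B C D i)⁻¹ = SG m n r A i := by
  apply Matrix.inv_eq_right_inv
  rw [SFM_mid (by omega) (by omega), SG, Matrix.fromBlocks_multiply]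
  simp only [Matrix.mul_zero, Matrix.zero_mul, add_zero, zero_add, Matrix.mul_one,
    Matrix.one_mul, FM_mul_GM h1 h2]
  exact Matrix.fromBlocks_one

theorem commute_fb {SP SQ : ℕ → Prop} {P Q : Matrix (Fin m × Fin n) (Fin m × Fin n) ℂ}
    (hP : OffId m n SP P) (hQ : OffId m n SQ Q) (hd : ∀ x, ¬(SP x ∧ SQ x)) :
    Commute (Matrix.fromBlocks P 0 0 (1 : Matrix (Fin r) (Fin r) ℂ))
      (Matrix.fromBlocks Q 0 0 (1 : Matrix (Fin r) (Fin r) ℂ)) := by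
  show _ = _
  rw [Matrix.fromBlocks_multiply, Matrix.fromBlocks_multiply]
  simp only [Matrix.mul_zero, Matrix.zero_mul, add_zero, zero_add, Matrix.mul_one,
    Matrix.one_mul]
  rw [(offId_commute hP hQ hd).eq]

theorem commute_m_fb {SQ : ℕ → Prop} {Q : Matrix (Fin m × Fin n) (Fin m × Fin n) ℂ}
    (hm : m ≠ 0) (hQ : OffId m n SQ Q) (hd : ¬ SQ 0) :
    Commute (SFM m n r A B C D m)
      (Matrix.fromBlocks Q 0 0 (1 : Matrix (Fin r) (Fin r) ℂ)) := by
  rw [SFM_m hm]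
  show _ = _
  rw [Matrix.fromBlocks_multiply, Matrix.fromBlocks_multiply]
  simp only [Matrix.mul_zero, Matrix.zero_mul, add_zero, zero_add, Matrix.mul_one,
    Matrix.one_mul]
  rw [(offId_commute (offId_FMm hm) hQ (by rintro x ⟨rfl, hx⟩; exact hd hx)).eq]

theorem commute_0_fb {SQ : ℕ → Prop} {Q : Matrix (Fin m × Fin n) (Fin m × Fin n) ℂ}
    (hQ : OffId m n SQ Q) (hd : ¬ SQ (m - 1)) :
    Commute (SFM m n r A B C D 0)
      (Matrix.fromBlocks Q 0 0 (1 : Matrix (Fin r) (Fin r) ℂ)) := by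
  rw [SFM_zero]
  show _ = _
  rw [Matrix.fromBlocks_multiply, Matrix.fromBlocks_multiply]
  simp only [Matrix.mul_zero, Matrix.zero_mul, add_zero, zero_add, Matrix.mul_one,
    Matrix.one_mul, Matrix.neg_mul, Matrix.mul_neg, neg_zero]
  have hsup : ∀ x : ℕ, SQ x → x ≠ m - 1 := fun x hx hxx => hd (hxx ▸ hx)
  rw [(offId_commute offId_FM0 hQ (by rintro x ⟨rfl, hx⟩; exact hd hx)).eq]
  rw [offId_mul_right hQ (eB m n r m B) (fun y c hy => eB_supp y c (hsup _ hy))]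
  rw [offId_mul_left hQ (eC m n r m C) (fun c y hy => eC_supp c y (hsup _ hy))]

theorem herm_SG {i : ℕ} (h1 : 1 ≤ i) (h2 : i < m) (hA : ∀ j, (A j).IsHermitian) :
    (SG m n r A i).IsHermitian := by
  show _ = _
  rw [SG, Matrix.fromBlocks_conjTranspose]
  rw [(herm_GM h1 h2 hA).eq, Matrix.conjTranspose_zero, Matrix.conjTranspose_zero,
    Matrix.conjTranspose_one]

theorem herm_SFM_m (hm : m ≠ 0) (hA : ∀ j, (A j).IsHermitian) :
    (SFM m n r A B C D m).IsHermitian := by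
  show _ = _
  rw [SFM_m hm, Matrix.fromBlocks_conjTranspose]
  rw [(herm_FMm hm (hA _)).eq, Matrix.conjTranspose_zero, Matrix.conjTranspose_zero,
    Matrix.conjTranspose_zero]

theorem herm_SFM_mid {i : ℕ} (h1 : 1 ≤ i) (h2 : i < m) (hA : ∀ j, (A j).IsHermitian) :
    (SFM m n r A B C D i).IsHermitian := by
  show _ = _
  rw [SFM_mid (by omega) (by omega), Matrix.fromBlocks_conjTranspose]
  rw [(herm_FMmid h1 h2 hA).eq, Matrix.conjTranspose_zero, Matrix.conjTranspose_zero,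
    Matrix.conjTranspose_one]

theorem herm_SFM_0 (hA : ∀ j, (A j).IsHermitian) (hC : C = Bᴴ) (hD : D.IsHermitian) :
    (SFM m n r A B C D 0).IsHermitian := by
  subst hC
  show _ = _
  rw [SFM_zero, Matrix.fromBlocks_conjTranspose]
  rw [(herm_FM0 (hA 0)).eq, Matrix.conjTranspose_neg, Matrix.conjTranspose_neg,
    Matrix.conjTranspose_neg, eB_conj, eC_conj, hD.eq, Matrix.conjTranspose_conjTranspose]

end S10

/-- if `m` is odd and `G` is Hermitian, then the PGF pencil
`𝕂(λ) = λ 𝕄_m 𝕄_{m−2}⁻¹ ⋯ 𝕄_3⁻¹ 𝕄_1⁻¹ − 𝕄_0 𝕄_2 ⋯ 𝕄_{m−3} 𝕄_{m−1}` of `G` is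
a Hermitian pencil. -/
theorem stmt10 (m n r : ℕ) (hm : 2 ≤ m) (hn : 1 ≤ n) (hr : 1 ≤ r) (hodd : m % 2 = 1)
    (A : Fin (m + 1) → Matrix (Fin n) (Fin n) ℂ) (hreg : Regular m n A)
    (B : Matrix (Fin n) (Fin r) ℂ) (C : Matrix (Fin r) (Fin n) ℂ)
    (D : Matrix (Fin r) (Fin r) ℂ)
    (hA : ∀ j, (A j).IsHermitian) (hC : C = Bᴴ) (hD : D.IsHermitian) :
    (SFM m n r A B C D m *
        ((((List.range m).filter fun i => i % 2 == 1).reverse.map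
          fun i => (SFM m n r A B C D i)⁻¹).prod)).IsHermitian ∧
    (SFM m n r A B C D 0 *
        (((List.range m).filter fun i => (i % 2 == 0) && (i != 0)).map
          (SFM m n r A B C D)).prod).IsHermitian := by
  have hm0 : m ≠ 0 := by omega
  have hmem1 : ∀ i ∈ ((List.range m).filter fun i => i % 2 == 1).reverse,
      i < m ∧ i % 2 = 1 := by
    intro i hi
    rw [List.mem_reverse, List.mem_filter, List.mem_range] at hi
    exact ⟨hi.1, by simpa using hi.2⟩
  have hmem2 : ∀ i ∈ (List.range m).filter (fun i => (i % 2 == 0) && (i != 0)),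
      i < m ∧ i % 2 = 0 ∧ i ≠ 0 := by
    intro i hi
    rw [List.mem_filter, List.mem_range] at hi
    have := hi.2
    simp only [Bool.and_eq_true, beq_iff_eq, bne_iff_ne, ne_eq] at this
    exact ⟨hi.1, this.1, this.2⟩
  constructor
  · rw [List.map_congr_left
      (fun i hi => S10.SFM_inv_eq (B := B) (C := C) (D := D)
        (by have h2 := (hmem1 i hi).2; omega) (hmem1 i hi).1)]
    rw [← List.prod_cons]
    apply S10.herm_prod
    · rw [List.pairwise_cons]
      constructor
      · intro X hX
        rw [List.mem_map] at hX
        obtain ⟨i, hi, rfl⟩ := hX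
        obtain ⟨him, hiodd⟩ := hmem1 i hi
        exact S10.commute_m_fb hm0 S10.offId_GM
          (by show ¬((0:ℕ) = m - i - 1 ∨ (0:ℕ) = m - i); omega)
      · rw [List.pairwise_map]
        refine List.Nodup.pairwise_of_forall_ne
          (List.nodup_reverse.mpr (List.Nodup.filter _ List.nodup_range)) ?_
        intro a ha b hb hab
        obtain ⟨ham, haodd⟩ := hmem1 a ha
        obtain ⟨hbm, hbodd⟩ := hmem1 b hb
        exact S10.commute_fb S10.offId_GM S10.offId_GM
          (by intro x
              show ¬((x = m - a - 1 ∨ x = m - a) ∧ (x = m - b - 1 ∨ x = m - b)); omega)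
    · intro X hX
      rw [List.mem_cons] at hX
      rcases hX with rfl | hX
      · exact S10.herm_SFM_m hm0 hA
      · rw [List.mem_map] at hX
        obtain ⟨i, hi, rfl⟩ := hX
        obtain ⟨him, hiodd⟩ := hmem1 i hi
        exact S10.herm_SG (by omega) him hA
  · rw [← List.prod_cons]
    apply S10.herm_prod
    · rw [List.pairwise_cons]
      constructor
      · intro X hX
        rw [List.mem_map] at hX
        obtain ⟨i, hi, rfl⟩ := hX
        obtain ⟨him, hie, hi0⟩ := hmem2 i hi
        have := S10.commute_0_fb (A := A) (B := B) (C := C) (D := D)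
          (S10.offId_FMmid (i := i) (A := A) hi0 (by omega))
          (by show ¬(m - 1 = m - i - 1 ∨ m - 1 = m - i); omega)
        rwa [← S10.SFM_mid hi0 (by omega)] at this
      · rw [List.pairwise_map]
        refine List.Nodup.pairwise_of_forall_ne
          (List.Nodup.filter _ List.nodup_range) ?_
        intro a ha b hb hab
        obtain ⟨ham, hae, ha0⟩ := hmem2 a ha
        obtain ⟨hbm, hbe, hb0⟩ := hmem2 b hb
        have := S10.commute_fb (r := r)
          (S10.offId_FMmid (i := a) (A := A) ha0 (by omega))
          (S10.offId_FMmid (i := b) (A := A) hb0 (by omega))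
          (by intro x
              show ¬((x = m - a - 1 ∨ x = m - a) ∧ (x = m - b - 1 ∨ x = m - b)); omega)
        rwa [← S10.SFM_mid (B := B) (C := C) (D := D) ha0 (by omega),
          ← S10.SFM_mid (B := B) (C := C) (D := D) hb0 (by omega)] at this
    · intro X hX
      rw [List.mem_cons] at hX
      rcases hX with rfl | hX
      · exact S10.herm_SFM_0 hA hC hD
      · rw [List.mem_map] at hX
        obtain ⟨i, hi, rfl⟩ := hX
        obtain ⟨him, hie, hi0⟩ := hmem2 i hi
        exact S10.herm_SFM_mid (by omega) him hA

end
end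

section
/- Let σ : {0,1,…,m−1} → {1,2,…,m} be a bijection with CISS(σ) = (c_1, i_1, …, c_l, i_l), and let 𝕊_σ(λ) := [[−L_σ(λ), e_m⊗B],[e_{m−c_1}^T⊗C, D]] if c_1 > 0 and 𝕊_σ(λ) := [[−L_σ(λ), e_{m−i_1}⊗B],[e_m^T⊗C, D]] if c_1 = 0. Let λ ∈ ℂ with P(λ) invertible, and suppose H : ℂ^n → ℂ^{nm} is a linear map such that diag(H, I_r) restricts to an isomorphism from N_l(S(λ)) = { z ∈ ℂ^{n+r} : z^T S(λ) = 0 } onto N_l(𝕊_σ(λ)) = { v ∈ ℂ^{nm+r} : v^T 𝕊_σ(λ) = 0 }. Then the map y ↦ (H (C P(λ)^{-1})^T y, y) is a linear isomorphism from N_l(G(λ)) = { y ∈ ℂ^r : y^T G(λ) = 0 } onto N_l(𝕊_σ(λ)). -/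
open Matrix
open Fin.NatCast

noncomputable section

/-- if `diag(H, I_r)` restricts to an isomorphism from `N_l(S(λ))` onto
`N_l(𝕊_σ(λ))`, then `y ↦ (H (C P(λ)⁻¹)ᵀ y, y)` is a linear isomorphism from `N_l(G(λ))`
onto `N_l(𝕊_σ(λ))`. -/
theorem stmt14 (m n r : ℕ) (hm : 2 ≤ m) (hn : 1 ≤ n) (hr : 1 ≤ r)
    (A : Fin (m + 1) → Matrix (Fin n) (Fin n) ℂ) (hreg : Regular m n A)
    (B : Matrix (Fin n) (Fin r) ℂ) (C : Matrix (Fin r) (Fin n) ℂ)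
    (D : Matrix (Fin r) (Fin r) ℂ)
    (σ : Equiv.Perm (Fin m)) (c1 i1 : ℕ) (hc1 : IsC1 m σ c1) (hi1 : IsI1 m σ c1 i1)
    (lam : ℂ) (hP : IsUnit (PEval m n A lam).det)
    (H : Matrix (Fin m × Fin n) (Fin n) ℂ)
    (hH : ∃ ψ : LinearMap.ker (Matrix.mulVecLin (SMat m n r A B C D lam)ᵀ) ≃ₗ[ℂ]
        LinearMap.ker (Matrix.mulVecLin (SP m n r A B C D σ c1 i1 lam)ᵀ),
      ∀ z, (ψ z : (Fin m × Fin n) ⊕ Fin r → ℂ) =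
        (Matrix.fromBlocks H 0 0 (1 : Matrix (Fin r) (Fin r) ℂ)).mulVec
          (z : Fin n ⊕ Fin r → ℂ)) :
    ∃ φ : LinearMap.ker (Matrix.mulVecLin (C * (PEval m n A lam)⁻¹ * B + D)ᵀ) ≃ₗ[ℂ]
        LinearMap.ker (Matrix.mulVecLin (SP m n r A B C D σ c1 i1 lam)ᵀ),
      ∀ y, (φ y : (Fin m × Fin n) ⊕ Fin r → ℂ) =
        Sum.elim ((H * (C * (PEval m n A lam)⁻¹)ᵀ).mulVec (y : Fin r → ℂ))
          (y : Fin r → ℂ) := by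
  classical
  obtain ⟨ψ, hψ⟩ := hH
  set P : Matrix (Fin n) (Fin n) ℂ := PEval m n A lam with hPdef
  have h1 : P⁻¹ * P = 1 := Matrix.nonsing_inv_mul P hP
  have h2 : P * P⁻¹ = 1 := Matrix.mul_nonsing_inv P hP
  set Q : Matrix (Fin n) (Fin r) ℂ := (C * P⁻¹)ᵀ with hQ
  set X : Matrix (Fin r) (Fin r) ℂ := C * P⁻¹ * B + D with hX
  -- basic matrix identities
  have hPQ : Pᵀ * Q = Cᵀ := by
    rw [hQ, ← Matrix.transpose_mul, Matrix.mul_assoc, h1, Matrix.mul_one]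
  have hPiC : (P⁻¹)ᵀ * Cᵀ = Q := by
    rw [hQ, Matrix.transpose_mul]
  have hPiP : (P⁻¹)ᵀ * Pᵀ = 1 := by
    rw [← Matrix.transpose_mul, h2, Matrix.transpose_one]
  have hXT : Xᵀ = Bᵀ * Q + Dᵀ := by
    rw [hX, Matrix.transpose_add, Matrix.transpose_mul, hQ]
  -- the forward linear map on ambient spaces
  let F : (Fin r → ℂ) →ₗ[ℂ] (Fin n ⊕ Fin r → ℂ) :=
    { toFun := fun y => Sum.elim (Q *ᵥ y) y
      map_add' := fun x y => by
        funext s; cases s <;> simp [Matrix.mulVec_add]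
      map_smul' := fun c y => by
        funext s; cases s <;> simp [Matrix.mulVec_smul] }
  let Gm : (Fin n ⊕ Fin r → ℂ) →ₗ[ℂ] (Fin r → ℂ) := LinearMap.funLeft ℂ ℂ Sum.inr
  -- forward membership
  have hFmem : ∀ y ∈ LinearMap.ker (Matrix.mulVecLin Xᵀ),
      F y ∈ LinearMap.ker (Matrix.mulVecLin (SMat m n r A B C D lam)ᵀ) := by
    intro y hy
    have hy' : Xᵀ *ᵥ y = 0 := hy
    show (SMat m n r A B C D lam)ᵀ *ᵥ (Sum.elim (Q *ᵥ y) y) = 0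
    rw [SMat, Matrix.fromBlocks_transpose, Matrix.fromBlocks_mulVec]
    have e1 : (-P)ᵀ *ᵥ (Q *ᵥ y) + Cᵀ *ᵥ y = 0 := by
      rw [Matrix.transpose_neg, Matrix.neg_mulVec, Matrix.mulVec_mulVec, hPQ,
        neg_add_cancel]
    have e2 : Bᵀ *ᵥ (Q *ᵥ y) + Dᵀ *ᵥ y = 0 := by
      rw [Matrix.mulVec_mulVec, ← Matrix.add_mulVec, ← hXT, hy']
    show Sum.elim ((-P)ᵀ *ᵥ (Q *ᵥ y) + Cᵀ *ᵥ y) (Bᵀ *ᵥ (Q *ᵥ y) + Dᵀ *ᵥ y) = 0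
    rw [e1, e2]
    funext s; cases s <;> rfl
  -- extracting the structure of kernel elements of Sᵀ
  have hker : ∀ z : Fin n ⊕ Fin r → ℂ,
      (SMat m n r A B C D lam)ᵀ *ᵥ z = 0 →
      (fun j => z (Sum.inl j)) = Q *ᵥ (fun j => z (Sum.inr j)) ∧
      Xᵀ *ᵥ (fun j => z (Sum.inr j)) = 0 := by
    intro z hz
    set z1 : Fin n → ℂ := fun j => z (Sum.inl j)
    set z2 : Fin r → ℂ := fun j => z (Sum.inr j)
    have hzz : z = Sum.elim z1 z2 := by funext s; cases s <;> rfl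
    rw [hzz, SMat, Matrix.fromBlocks_transpose, Matrix.fromBlocks_mulVec] at hz
    have e1 : (-P)ᵀ *ᵥ z1 + Cᵀ *ᵥ z2 = 0 := funext fun a => congrFun hz (Sum.inl a)
    have e2 : Bᵀ *ᵥ z1 + Dᵀ *ᵥ z2 = 0 := funext fun a => congrFun hz (Sum.inr a)
    have e1' : Pᵀ *ᵥ z1 = Cᵀ *ᵥ z2 := by
      rw [Matrix.transpose_neg, Matrix.neg_mulVec] at e1
      have := neg_add_eq_zero.mp e1
      exact this.symm ▸ rfl
    have hz1 : z1 = Q *ᵥ z2 := by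
      have : (P⁻¹)ᵀ *ᵥ (Pᵀ *ᵥ z1) = (P⁻¹)ᵀ *ᵥ (Cᵀ *ᵥ z2) := by rw [e1']
      rwa [Matrix.mulVec_mulVec, Matrix.mulVec_mulVec, hPiP, hPiC,
        Matrix.one_mulVec] at this
    refine ⟨hz1, ?_⟩
    rw [hXT, Matrix.add_mulVec, ← Matrix.mulVec_mulVec, ← hz1, e2]
  have hGmem : ∀ z ∈ LinearMap.ker (Matrix.mulVecLin (SMat m n r A B C D lam)ᵀ),
      Gm z ∈ LinearMap.ker (Matrix.mulVecLin Xᵀ) := by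
    intro z hz
    exact (hker z hz).2
  -- the equivalence between the two kernels
  let f := F.restrict hFmem
  let g := Gm.restrict hGmem
  have hgf : g.comp f = LinearMap.id := by
    ext y
    rfl
  have hfg : f.comp g = LinearMap.id := by
    ext z j
    obtain ⟨h1', _⟩ := hker (z : Fin n ⊕ Fin r → ℂ) z.2
    cases j with
    | inl a => exact (congrFun h1' a).symm
    | inr a => rfl
  let θ : LinearMap.ker (Matrix.mulVecLin Xᵀ) ≃ₗ[ℂ]
      LinearMap.ker (Matrix.mulVecLin (SMat m n r A B C D lam)ᵀ) :=
    LinearEquiv.ofLinear f g hfg hgf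
  refine ⟨θ.trans ψ, fun y => ?_⟩
  have := hψ (θ y)
  rw [LinearEquiv.trans_apply, this]
  have hθ : ((θ y : LinearMap.ker (Matrix.mulVecLin (SMat m n r A B C D lam)ᵀ)) :
      Fin n ⊕ Fin r → ℂ) = Sum.elim (Q *ᵥ (y : Fin r → ℂ)) (y : Fin r → ℂ) := rfl
  rw [hθ, Matrix.fromBlocks_mulVec]
  funext s
  cases s with
  | inl a =>
    simp [Matrix.mulVec_mulVec]
  | inr a =>
    simp


end
end

section
/- Let λ ∈ ℂ be such that P(λ) is invertible, and let C_1(λ) be the first companion form of S. For x ∈ ℂ^r, set w := P(λ)^{-1} B x ∈ ℂ^n and let v ∈ ℂ^{nm+r} be the block vector v = (λ^{m−1}w, λ^{m−2}w, …, λw, w, x). Then G(λ)x = 0 if and only if C_1(λ)v = 0, and the map x ↦ v is a linear isomorphism from the null space of G(λ) onto the null space of C_1(λ). -/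
open Matrix
open Fin.NatCast

noncomputable section

variable {m n r : ℕ}

lemma row_succ (hm : 2 ≤ m) (A : Fin (m + 1) → Matrix (Fin n) (Fin n) ℂ)
    (B : Matrix (Fin n) (Fin r) ℂ) (C : Matrix (Fin r) (Fin n) ℂ) (D : Matrix (Fin r) (Fin r) ℂ)
    (lam : ℂ) (v : (Fin m × Fin n) ⊕ Fin r → ℂ) (k : ℕ) (h : k + 1 < m) (i : Fin n) :
    (C1P m n r A B C D lam).mulVec v (Sum.inl (⟨k+1, h⟩, i)) =
      v (Sum.inl (⟨k, by omega⟩, i)) - lam * v (Sum.inl (⟨k+1, h⟩, i)) := by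
  simp only [mulVec, dotProduct, Fintype.sum_sum_type, Fintype.sum_prod_type]
  have h1 : ∀ s : Fin r, C1P m n r A B C D lam (Sum.inl (⟨k+1,h⟩, i)) (Sum.inr s) = 0 := by
    intro s
    simp [C1P, eB]
  simp only [h1, zero_mul, Finset.sum_const_zero, add_zero]
  have h2 : ∀ (q1 : Fin m) (q2 : Fin n),
      C1P m n r A B C D lam (Sum.inl (⟨k+1,h⟩, i)) (Sum.inl (q1, q2)) =
      (if q1 = ⟨k, by omega⟩ then (if q2 = i then 1 else 0) else 0)
      - lam * (if q1 = ⟨k+1, h⟩ then (if q2 = i then 1 else 0) else 0) := by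
    rintro ⟨a, ha⟩ q2
    have hk0 : ¬ (m = 0) := by omega
    simp only [C1P, fromBlocks_apply₁₁, Matrix.neg_apply, Matrix.sub_apply, Matrix.smul_apply, FM, N1,
      Matrix.of_apply, smul_eq_mul, hk0, if_false, eq_self_iff_true, if_true,
      Fin.mk.injEq, Nat.succ_ne_zero]
    simp only [apply_ite (fun M : Matrix (Fin n) (Fin n) ℂ => M i q2), Matrix.one_apply,
      Matrix.zero_apply]
    split_ifs <;> first | omega | ring | simp_all
  simp only [h2]
  simp [sub_mul, ite_mul, zero_mul, one_mul, Finset.sum_sub_distrib, Finset.sum_ite_eq,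
    Finset.sum_ite_eq', Finset.mem_univ, if_true, mul_ite, mul_zero]

lemma row_zero (hm : 2 ≤ m) (A : Fin (m + 1) → Matrix (Fin n) (Fin n) ℂ)
    (B : Matrix (Fin n) (Fin r) ℂ) (C : Matrix (Fin r) (Fin n) ℂ) (D : Matrix (Fin r) (Fin r) ℂ)
    (lam : ℂ) (v : (Fin m × Fin n) ⊕ Fin r → ℂ) (i : Fin n) :
    (C1P m n r A B C D lam).mulVec v (Sum.inl (⟨0, by omega⟩, i)) =
      -(lam * ((A (m : Fin (m+1))).mulVec (fun j => v (Sum.inl (⟨0, by omega⟩, j))) i))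
      - ∑ q1 : Fin m,
          (A ((m - 1 - (q1:ℕ) : ℕ) : Fin (m+1))).mulVec (fun j => v (Sum.inl (q1, j))) i
      + B.mulVec (fun s => v (Sum.inr s)) i := by
  simp only [mulVec, dotProduct, Fintype.sum_sum_type, Fintype.sum_prod_type]
  have h1 : ∀ s : Fin r, C1P m n r A B C D lam (Sum.inl (⟨0, by omega⟩, i)) (Sum.inr s) = B i s := by
    intro s; simp [C1P, eB]
  have h2 : ∀ (q1 : Fin m) (q2 : Fin n),
      C1P m n r A B C D lam (Sum.inl (⟨0, by omega⟩, i)) (Sum.inl (q1, q2)) =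
      -(lam * (if q1 = ⟨0, by omega⟩ then A (m : Fin (m+1)) i q2 else 0))
      - A ((m - 1 - (q1:ℕ) : ℕ) : Fin (m+1)) i q2 := by
    rintro ⟨a, ha⟩ q2
    have hk0 : ¬ (m = 0) := by omega
    simp only [C1P, fromBlocks_apply₁₁, Matrix.neg_apply, Matrix.sub_apply, Matrix.smul_apply, FM, N1,
      Matrix.of_apply, smul_eq_mul, hk0, if_false, eq_self_iff_true, if_true, Fin.mk.injEq]
    simp only [apply_ite (fun M : Matrix (Fin n) (Fin n) ℂ => M i q2), Matrix.one_apply,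
      Matrix.zero_apply, Matrix.neg_apply]
    split_ifs <;> first | omega | ring | simp_all
  simp only [h1, h2]
  simp only [sub_mul, neg_mul, Finset.sum_sub_distrib, Finset.sum_neg_distrib, ite_mul,
    zero_mul, mul_assoc]
  congr 2
  rw [Finset.sum_eq_single (⟨0, by omega⟩ : Fin m)]
  · simp [Finset.mul_sum]
  · intro b _ hb
    simp [hb]
  · simp

lemma row_bot (hm : 2 ≤ m) (A : Fin (m + 1) → Matrix (Fin n) (Fin n) ℂ)
    (B : Matrix (Fin n) (Fin r) ℂ) (C : Matrix (Fin r) (Fin n) ℂ) (D : Matrix (Fin r) (Fin r) ℂ)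
    (lam : ℂ) (v : (Fin m × Fin n) ⊕ Fin r → ℂ) (s : Fin r) :
    (C1P m n r A B C D lam).mulVec v (Sum.inr s) =
      C.mulVec (fun j => v (Sum.inl (⟨m - 1, by omega⟩, j))) s
      + D.mulVec (fun t => v (Sum.inr t)) s := by
  simp only [mulVec, dotProduct, Fintype.sum_sum_type, Fintype.sum_prod_type]
  have h1 : ∀ (q1 : Fin m) (q2 : Fin n),
      C1P m n r A B C D lam (Sum.inr s) (Sum.inl (q1, q2)) =
      if q1 = ⟨m - 1, by omega⟩ then C s q2 else 0 := by
    rintro ⟨a, ha⟩ q2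
    simp only [C1P, fromBlocks_apply₂₁, eC, Matrix.of_apply, Fin.mk.injEq]
    split_ifs <;> first | rfl | omega
  have h3 : ∀ t : Fin r, C1P m n r A B C D lam (Sum.inr s) (Sum.inr t) = D s t := by
    intro t; simp [C1P]
  simp only [h1, h3]
  congr 1
  rw [Finset.sum_comm]
  simp [Finset.sum_ite_eq']

lemma keyP (hm : 2 ≤ m) (A : Fin (m + 1) → Matrix (Fin n) (Fin n) ℂ) (lam : ℂ)
    (u : Fin n → ℂ) (i : Fin n) :
    lam * (A (m : Fin (m+1))).mulVec (fun j => lam ^ (m-1) * u j) i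
      + ∑ q1 : Fin m, (A ((m - 1 - (q1:ℕ) : ℕ) : Fin (m+1))).mulVec
          (fun j => lam ^ (m - 1 - (q1:ℕ)) * u j) i
      = (PEval m n A lam).mulVec u i := by
  have hsm : ∀ (M : Matrix (Fin n) (Fin n) ℂ) (c : ℂ),
      M.mulVec (fun j => c * u j) i = c * M.mulVec u i := by
    intro M c
    simp [mulVec, dotProduct, Finset.mul_sum]
    exact Finset.sum_congr rfl fun j _ => by ring
  have hsum : (PEval m n A lam).mulVec u i
      = ∑ j : Fin (m+1), lam ^ (j:ℕ) * (A j).mulVec u i := by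
    simp only [PEval, mulVec, dotProduct, Matrix.sum_apply, Matrix.smul_apply, smul_eq_mul,
      Finset.sum_mul]
    rw [Finset.sum_comm]
    refine Finset.sum_congr rfl fun j _ => ?_
    rw [Finset.mul_sum]
    exact Finset.sum_congr rfl fun k _ => by ring
  rw [hsum, Fin.sum_univ_castSucc]
  have hlast : A (Fin.last m) = A ((m : ℕ) : Fin (m+1)) := by
    congr 1
    ext
    simp [Fin.val_natCast, Nat.mod_eq_of_lt]
  have h2 : ∑ q1 : Fin m, (A ((m - 1 - (q1:ℕ) : ℕ) : Fin (m+1))).mulVec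
        (fun j => lam ^ (m - 1 - (q1:ℕ)) * u j) i
      = ∑ j : Fin m, lam ^ ((j.castSucc : Fin (m+1)):ℕ) * (A j.castSucc).mulVec u i := by
    refine (Finset.sum_bijective Fin.rev Fin.rev_bijective (fun x => by simp) ?_).symm
    intro j _
    have hv : ((j.rev : Fin m) : ℕ) = m - 1 - (j : ℕ) := by
      rw [Fin.val_rev]; omega
    have hj : (m - 1 - ((j.rev : Fin m) : ℕ)) = (j : ℕ) := by
      rw [hv]; have := j.isLt; omega
    have hc : (((m - 1 - ((j.rev : Fin m) : ℕ) : ℕ)) : Fin (m+1)) = j.castSucc := by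
      rw [hj]; ext; simp [Fin.val_natCast, Nat.mod_eq_of_lt (by omega : (j:ℕ) < m + 1)]
    rw [hc, hj, hsm]
    simp
  rw [h2, hlast, hsm]
  have : ((Fin.last m : Fin (m+1)) : ℕ) = m := rfl
  rw [this]
  have hpow : lam * lam ^ (m - 1) = lam ^ m := by
    rw [mul_comm, ← pow_succ]
    congr 1
    omega
  rw [← mul_assoc, hpow]
  ring

/-- The block vector `v = (λ^{m-1}w, …, λw, w, x)` with `w = P(λ)⁻¹ B x`. -/
def Vv (m n r : ℕ) (A : Fin (m + 1) → Matrix (Fin n) (Fin n) ℂ)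
    (B : Matrix (Fin n) (Fin r) ℂ) (lam : ℂ) (x : Fin r → ℂ) :
    (Fin m × Fin n) ⊕ Fin r → ℂ :=
  Sum.elim
    (fun p : Fin m × Fin n =>
      lam ^ (m - 1 - (p.1 : ℕ)) * ((PEval m n A lam)⁻¹ * B).mulVec x p.2)
    x

lemma fwd (hm : 2 ≤ m) (A : Fin (m + 1) → Matrix (Fin n) (Fin n) ℂ)
    (B : Matrix (Fin n) (Fin r) ℂ) (C : Matrix (Fin r) (Fin n) ℂ) (D : Matrix (Fin r) (Fin r) ℂ)
    (lam : ℂ) (hP : IsUnit (PEval m n A lam).det) (x : Fin r → ℂ) :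
    (C1P m n r A B C D lam).mulVec (Vv m n r A B lam x)
      = Sum.elim (0 : Fin m × Fin n → ℂ) ((C * (PEval m n A lam)⁻¹ * B + D).mulVec x) := by
  have hPw : (PEval m n A lam).mulVec (((PEval m n A lam)⁻¹ * B).mulVec x) = B.mulVec x := by
    rw [mulVec_mulVec, ← Matrix.mul_assoc, Matrix.mul_nonsing_inv _ hP, Matrix.one_mul]
  funext y
  cases y with
  | inl p =>
    obtain ⟨⟨k, hk⟩, i⟩ := p
    cases k with
    | zero =>
      rw [row_zero hm A B C D lam _ i]
      simp only [Vv, Sum.elim_inl, Sum.elim_inr, Pi.zero_apply]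
      have hk2 := keyP hm A lam (((PEval m n A lam)⁻¹ * B).mulVec x) i
      have hPwi := congrFun hPw i
      have h0 : ((⟨0, hk⟩ : Fin m) : ℕ) = 0 := rfl
      simp only [h0, Nat.sub_zero, show (fun s => x s) = x from rfl]
      linear_combination -hk2 - hPwi
    | succ k =>
      rw [row_succ hm A B C D lam _ k hk]
      simp only [Vv, Sum.elim_inl, Sum.elim_inr, Pi.zero_apply]
      have h0 : ((⟨k, by omega⟩ : Fin m) : ℕ) = k := rfl
      have h1 : ((⟨k + 1, hk⟩ : Fin m) : ℕ) = k + 1 := rfl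
      have h2 : m - 1 - k = (m - 1 - (k + 1)) + 1 := by omega
      rw [h2, pow_succ]
      ring
  | inr s =>
    rw [row_bot hm A B C D lam _ s]
    simp only [Vv, Sum.elim_inl, Sum.elim_inr]
    have h0 : ((⟨m - 1, by omega⟩ : Fin m) : ℕ) = m - 1 := rfl
    simp only [h0, Nat.sub_self, pow_zero, one_mul]
    rw [Matrix.add_mulVec, Pi.add_apply, Matrix.mul_assoc,
      ← mulVec_mulVec x C ((PEval m n A lam)⁻¹ * B)]

lemma bwd (hm : 2 ≤ m) (A : Fin (m + 1) → Matrix (Fin n) (Fin n) ℂ)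
    (B : Matrix (Fin n) (Fin r) ℂ) (C : Matrix (Fin r) (Fin n) ℂ) (D : Matrix (Fin r) (Fin r) ℂ)
    (lam : ℂ) (hP : IsUnit (PEval m n A lam).det) (v : (Fin m × Fin n) ⊕ Fin r → ℂ)
    (hv : (C1P m n r A B C D lam).mulVec v = 0) :
    v = Vv m n r A B lam (fun s => v (Sum.inr s)) ∧
      (C * (PEval m n A lam)⁻¹ * B + D).mulVec (fun s => v (Sum.inr s)) = 0 := by
  have hstep : ∀ d, d ≤ m - 1 → ∀ j,
      v (Sum.inl (⟨m - 1 - d, by omega⟩, j))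
        = lam ^ d * v (Sum.inl (⟨m - 1, by omega⟩, j)) := by
    intro d
    induction d with
    | zero =>
      intro _ j
      simp only [Nat.sub_zero, pow_zero, one_mul]
    | succ d ih =>
      intro hd j
      have hrow := row_succ hm A B C D lam v (m - 1 - (d + 1)) (by omega) j
      rw [congrFun hv _] at hrow
      simp only [Pi.zero_apply] at hrow
      have hidx : (⟨m - 1 - (d + 1) + 1, by omega⟩ : Fin m) = ⟨m - 1 - d, by omega⟩ :=
        Fin.ext (by simp; omega)
      rw [hidx] at hrow
      have := ih (by omega) j
      have h5 : v (Sum.inl (⟨m - 1 - (d + 1), by omega⟩, j))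
          = lam * v (Sum.inl (⟨m - 1 - d, by omega⟩, j)) := by linear_combination -hrow
      rw [h5, this, pow_succ]
      ring
  have hcol : ∀ (k : ℕ) (hk : k < m) (j : Fin n),
      v (Sum.inl (⟨k, hk⟩, j))
        = lam ^ (m - 1 - k) * v (Sum.inl (⟨m - 1, by omega⟩, j)) := by
    intro k hk j
    have h2 := hstep (m - 1 - k) (by omega) j
    have hidx : (⟨m - 1 - (m - 1 - k), by omega⟩ : Fin m) = ⟨k, hk⟩ :=
      Fin.ext (by simp; omega)
    rw [hidx] at h2
    exact h2
  have hrow0 : (PEval m n A lam).mulVec (fun j => v (Sum.inl (⟨m - 1, by omega⟩, j)))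
      = B.mulVec (fun s => v (Sum.inr s)) := by
    funext i
    have hrow := row_zero hm A B C D lam v i
    rw [congrFun hv _] at hrow
    have hc : ∀ q1 : Fin m, (fun j => v (Sum.inl (q1, j)))
        = fun j => lam ^ (m - 1 - (q1 : ℕ)) * v (Sum.inl (⟨m - 1, by omega⟩, j)) := by
      intro q1
      funext j
      have := hcol (q1 : ℕ) q1.isLt j
      simpa using this
    simp only [Pi.zero_apply] at hrow
    simp only [hc] at hrow
    have hk2 := keyP hm A lam (fun j => v (Sum.inl (⟨m - 1, by omega⟩, j))) i
    have h0 : ((⟨0, by omega⟩ : Fin m) : ℕ) = 0 := rfl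
    simp only [h0, Nat.sub_zero] at hrow
    linear_combination hrow - hk2
  have hu : (fun j => v (Sum.inl (⟨m - 1, by omega⟩, j)))
      = ((PEval m n A lam)⁻¹ * B).mulVec (fun s => v (Sum.inr s)) := by
    have h3 : ((PEval m n A lam)⁻¹ * (PEval m n A lam)).mulVec
        (fun j => v (Sum.inl (⟨m - 1, by omega⟩, j)))
        = ((PEval m n A lam)⁻¹ * B).mulVec (fun s => v (Sum.inr s)) := by
      rw [← mulVec_mulVec, hrow0, mulVec_mulVec]
    rwa [Matrix.nonsing_inv_mul _ hP, Matrix.one_mulVec] at h3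
  constructor
  · funext y
    cases y with
    | inl p =>
      obtain ⟨p1, p2⟩ := p
      have := hcol (p1 : ℕ) p1.isLt p2
      simp only [Fin.eta] at this
      rw [this, congrFun hu p2]
      rfl
    | inr s => rfl
  · funext s
    have hrow := row_bot hm A B C D lam v s
    rw [congrFun hv _] at hrow
    rw [hu] at hrow
    rw [Matrix.add_mulVec]
    have : (C * (PEval m n A lam)⁻¹ * B).mulVec (fun s => v (Sum.inr s))
        = C.mulVec (((PEval m n A lam)⁻¹ * B).mulVec (fun s => v (Sum.inr s))) := by
      rw [mulVec_mulVec, Matrix.mul_assoc]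
    simp only [Pi.zero_apply] at hrow
    rw [Pi.add_apply, this, Pi.zero_apply]
    linear_combination -hrow

set_option maxHeartbeats 1000000 in
/-- with `w := P(λ)⁻¹ B x` and `v := (λ^{m−1}w, …, λw, w, x)`, we have
`G(λ)x = 0 ↔ C_1(λ)v = 0`, and `x ↦ v` is a linear isomorphism from the null space of
`G(λ)` onto the null space of the first companion form `C_1(λ)`. -/
theorem stmt15 (m n r : ℕ) (hm : 2 ≤ m) (hn : 1 ≤ n) (hr : 1 ≤ r)
    (A : Fin (m + 1) → Matrix (Fin n) (Fin n) ℂ) (hreg : Regular m n A)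
    (B : Matrix (Fin n) (Fin r) ℂ) (C : Matrix (Fin r) (Fin n) ℂ)
    (D : Matrix (Fin r) (Fin r) ℂ)
    (lam : ℂ) (hP : IsUnit (PEval m n A lam).det) :
    (∀ x : Fin r → ℂ,
      (C * (PEval m n A lam)⁻¹ * B + D).mulVec x = 0 ↔
        (C1P m n r A B C D lam).mulVec
          (Sum.elim
            (fun p : Fin m × Fin n =>
              lam ^ (m - 1 - (p.1 : ℕ)) * ((PEval m n A lam)⁻¹ * B).mulVec x p.2)
            x) = 0) ∧
    ∃ φ : LinearMap.ker (Matrix.mulVecLin (C * (PEval m n A lam)⁻¹ * B + D)) ≃ₗ[ℂ]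
        LinearMap.ker (Matrix.mulVecLin (C1P m n r A B C D lam)),
      ∀ x, (φ x : (Fin m × Fin n) ⊕ Fin r → ℂ) =
        Sum.elim
          (fun p : Fin m × Fin n =>
            lam ^ (m - 1 - (p.1 : ℕ)) *
              ((PEval m n A lam)⁻¹ * B).mulVec (x : Fin r → ℂ) p.2)
          (x : Fin r → ℂ) := by
  classical
  have hiff : ∀ x : Fin r → ℂ,
      (C * (PEval m n A lam)⁻¹ * B + D).mulVec x = 0 ↔
        (C1P m n r A B C D lam).mulVec (Vv m n r A B lam x) = 0 := by
    intro x
    constructor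
    · intro hx
      rw [fwd hm A B C D lam hP x, hx]
      funext y
      cases y <;> rfl
    · intro hx
      have h1 := fwd hm A B C D lam hP x
      rw [hx] at h1
      funext s
      exact (congrFun h1 (Sum.inr s)).symm
  have hVadd : ∀ x y : Fin r → ℂ,
      Vv m n r A B lam (x + y) = Vv m n r A B lam x + Vv m n r A B lam y := by
    intro x y
    funext z
    cases z with
    | inl p => simp [Vv, Matrix.mulVec_add]; ring
    | inr s => rfl
  have hVsmul : ∀ (c : ℂ) (x : Fin r → ℂ),
      Vv m n r A B lam (c • x) = c • Vv m n r A B lam x := by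
    intro c x
    funext z
    cases z with
    | inl p => simp [Vv, Matrix.mulVec_smul]; ring
    | inr s => rfl
  refine ⟨fun x => hiff x, ?_⟩
  refine ⟨{ toFun := fun x => ⟨Vv m n r A B lam (x : Fin r → ℂ), ?_⟩
            map_add' := ?_
            map_smul' := ?_
            invFun := fun v => ⟨fun s => (v : (Fin m × Fin n) ⊕ Fin r → ℂ) (Sum.inr s), ?_⟩
            left_inv := ?_
            right_inv := ?_ }, fun x => rfl⟩
  · have hx := x.2
    rw [LinearMap.mem_ker, Matrix.mulVecLin_apply] at hx ⊢
    exact (hiff _).1 hx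
  · intro x y
    exact Subtype.ext (hVadd (x : Fin r → ℂ) (y : Fin r → ℂ))
  · intro c x
    exact Subtype.ext (hVsmul c (x : Fin r → ℂ))
  · have hx := v.2
    rw [LinearMap.mem_ker, Matrix.mulVecLin_apply] at hx ⊢
    exact (bwd hm A B C D lam hP _ hx).2
  · intro x
    exact Subtype.ext rfl
  · intro v
    have hx := v.2
    rw [LinearMap.mem_ker, Matrix.mulVecLin_apply] at hx
    exact Subtype.ext ((bwd hm A B C D lam hP _ hx).1).symm


end
end

section
/- Let λ ∈ ℂ be such that P(λ) is invertible, and let C_2(λ) be the second companion form of S. For y ∈ ℂ^r, set s := (C P(λ)^{-1})^T y ∈ ℂ^n and let u ∈ ℂ^{nm+r} be the block vector u = (λ^{m−1}s, λ^{m−2}s, …, λs, s, y). Then y^T G(λ) = 0 if and only if u^T C_2(λ) = 0, and the map y ↦ u is a linear isomorphism from the left null space of G(λ) onto the left null space of C_2(λ). -/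
open Matrix
open Fin.NatCast

noncomputable section

lemma stmt17_vecMul_L2 (m n : ℕ) (hm : 2 ≤ m) (A : Fin (m + 1) → Matrix (Fin n) (Fin n) ℂ)
    (lam : ℂ) (t : Fin n → ℂ) (q : Fin m × Fin n) :
    Matrix.vecMul (fun p : Fin m × Fin n => lam ^ (m - 1 - (p.1 : ℕ)) * t p.2)
      (lam • FM m n A m - N2 m n A) q =
    if (q.1 : ℕ) = 0 then Matrix.vecMul t (PEval m n A lam) q.2 else 0 := by
  obtain ⟨q1, q2⟩ := q
  have hm0 : m ≠ 0 := by omega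
  simp only [Matrix.vecMul, dotProduct, Matrix.sub_apply, Matrix.smul_apply,
    smul_eq_mul, FM, N2, hm0, if_false, if_true, Matrix.of_apply]
  by_cases hq : (q1 : ℕ) = 0
  · rw [if_pos hq]
    rw [Fintype.sum_prod_type]
    have hcast : ((m : ℕ) : Fin (m + 1)) = Fin.last m := by
      ext; simp [Fin.val_cast_of_lt (Nat.lt_succ_self m)]
    have step : ∀ p1 : Fin m, ∀ p2 : Fin n,
        lam ^ (m - 1 - (p1 : ℕ)) * t p2 *
          (lam * (if p1 = q1 then if (p1 : ℕ) = 0 then A ((m : ℕ) : Fin (m+1)) else 1 else 0) p2 q2 -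
            (if (q1 : ℕ) = 0 then -A ((m - 1 - (p1 : ℕ) : ℕ) : Fin (m + 1))
              else if (q1 : ℕ) = (p1 : ℕ) + 1 then (1 : Matrix (Fin n) (Fin n) ℂ) else 0) p2 q2)
        = (if p1 = q1 then lam ^ m * t p2 * A (Fin.last m) p2 q2 else 0)
          + lam ^ (m - 1 - (p1 : ℕ)) * t p2 * A ((m - 1 - (p1 : ℕ) : ℕ) : Fin (m + 1)) p2 q2 := by
      intro p1 p2
      rw [if_pos hq]
      by_cases h1 : p1 = q1
      · subst h1
        rw [if_pos rfl, if_pos rfl, if_pos hq, hcast, Matrix.neg_apply]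
        have : (m : ℕ) - 1 - (p1 : ℕ) = m - 1 := by omega
        rw [this]
        have hpow : lam * lam ^ (m - 1) = lam ^ m := by
          rw [mul_comm, ← pow_succ]; congr 1; omega
        ring_nf
        rw [hpow]
        ring
      · rw [if_neg h1, if_neg h1, Matrix.zero_apply, Matrix.neg_apply]
        ring
    rw [Finset.sum_congr rfl fun p1 _ => Finset.sum_congr rfl fun p2 _ => step p1 p2]
    have q1eq : q1 = ⟨0, by omega⟩ := by ext; exact hq
    simp only [Finset.sum_add_distrib]
    rw [Finset.sum_comm (f := fun p1 p2 => if p1 = q1 then lam ^ m * t p2 * A (Fin.last m) p2 q2 else 0)]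
    simp only [Finset.sum_ite_eq', Finset.mem_univ, if_pos]
    -- RHS
    have rhs : ∀ p2 : Fin n, t p2 * PEval m n A lam p2 q2
        = ∑ j : Fin (m + 1), t p2 * (lam ^ (j : ℕ) * A j p2 q2) := by
      intro p2
      rw [PEval, Matrix.sum_apply, Finset.mul_sum]
      exact Finset.sum_congr rfl fun j _ => by rw [Matrix.smul_apply, smul_eq_mul]
    have reindex : ∑ i : Fin m, ∑ p2 : Fin n, t p2 * (lam ^ ((i.castSucc : Fin (m+1)) : ℕ) * A i.castSucc p2 q2)
        = ∑ p1 : Fin m, ∑ p2 : Fin n,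
            lam ^ (m - 1 - (p1 : ℕ)) * t p2 * A ((m - 1 - (p1 : ℕ) : ℕ) : Fin (m + 1)) p2 q2 := by
      rw [← Equiv.sum_comp (Fin.revPerm) (fun i : Fin m => ∑ p2 : Fin n, t p2 * (lam ^ ((i.castSucc : Fin (m+1)) : ℕ) * A i.castSucc p2 q2))]
      refine Finset.sum_congr rfl fun p1 _ => Finset.sum_congr rfl fun p2 _ => ?_
      have hc : ((Fin.revPerm p1 : Fin m).castSucc : Fin (m+1)) = ((m - 1 - (p1 : ℕ) : ℕ) : Fin (m + 1)) := by
        ext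
        simp [Fin.val_rev, Fin.val_cast_of_lt (show m - 1 - (p1:ℕ) < m + 1 by omega)]
        omega
      rw [hc]
      have : (( ((m - 1 - (p1 : ℕ) : ℕ) : Fin (m + 1)) : Fin (m+1)) : ℕ) = m - 1 - (p1 : ℕ) :=
        Fin.val_cast_of_lt (by omega)
      rw [this]; ring
    have hRHS : (∑ x : Fin n, t x * PEval m n A lam x q2)
        = (∑ x : Fin n, lam ^ m * t x * A (Fin.last m) x q2) +
          ∑ y : Fin n, ∑ x : Fin m,
            lam ^ (m - 1 - (x : ℕ)) * t y * A ((m - 1 - (x : ℕ) : ℕ) : Fin (m + 1)) y q2 := by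
      calc (∑ x : Fin n, t x * PEval m n A lam x q2)
          = ∑ x : Fin n, ∑ j : Fin (m + 1), t x * (lam ^ (j : ℕ) * A j x q2) :=
            Finset.sum_congr rfl fun p2 _ => rhs p2
        _ = ∑ j : Fin (m + 1), ∑ x : Fin n, t x * (lam ^ (j : ℕ) * A j x q2) := Finset.sum_comm
        _ = (∑ i : Fin m, ∑ x : Fin n, t x * (lam ^ ((i.castSucc : Fin (m+1)) : ℕ) * A i.castSucc x q2))
              + ∑ x : Fin n, t x * (lam ^ ((Fin.last m : Fin (m+1)) : ℕ) * A (Fin.last m) x q2) :=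
            Fin.sum_univ_castSucc (f := fun j : Fin (m+1) => ∑ x : Fin n, t x * (lam ^ (j : ℕ) * A j x q2))
        _ = (∑ x : Fin n, lam ^ m * t x * A (Fin.last m) x q2) +
            ∑ y : Fin n, ∑ x : Fin m,
              lam ^ (m - 1 - (x : ℕ)) * t y * A ((m - 1 - (x : ℕ) : ℕ) : Fin (m + 1)) y q2 := by
            rw [reindex, Finset.sum_comm (f := fun (x : Fin m) (y : Fin n) =>
              lam ^ (m - 1 - (x : ℕ)) * t y * A ((m - 1 - (x : ℕ) : ℕ) : Fin (m + 1)) y q2)]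
            rw [add_comm]
            congr 1
            exact Finset.sum_congr rfl fun x _ => by
              rw [show ((Fin.last m : Fin (m+1)) : ℕ) = m from rfl]; ring
    rw [hRHS]
    congr 1
    exact Finset.sum_comm
  · rw [if_neg hq]
    obtain ⟨c, hc⟩ : ∃ c, (q1 : ℕ) = c + 1 := ⟨(q1 : ℕ) - 1, by omega⟩
    have hcm : c < m := by have := q1.isLt; omega
    set prev : Fin m := ⟨c, hcm⟩ with hprev
    have step : ∀ p : Fin m × Fin n,
        lam ^ (m - 1 - (p.1 : ℕ)) * t p.2 *
          (lam * (if p.1 = q1 then if (p.1 : ℕ) = 0 then A ((m : ℕ) : Fin (m+1)) else 1 else 0) p.2 q2 -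
            (if (q1 : ℕ) = 0 then -A ((m - 1 - (p.1 : ℕ) : ℕ) : Fin (m + 1))
              else if (q1 : ℕ) = (p.1 : ℕ) + 1 then (1 : Matrix (Fin n) (Fin n) ℂ) else 0) p.2 q2)
        = (if p = (q1, q2) then lam ^ (m - (q1 : ℕ)) * t q2 else 0)
          - (if p = (prev, q2) then lam ^ (m - (q1 : ℕ)) * t q2 else 0) := by
      rintro ⟨p1, p2⟩
      rw [if_neg hq]
      by_cases h1 : p1 = q1
      · subst h1
        have hp0 : ¬ (p1 : ℕ) = 0 := by omega
        have hne : ¬ (p1 : ℕ) = (p1 : ℕ) + 1 := by omega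
        have hnp : ¬ ((p1, p2) = (prev, q2)) := by
          simp only [Prod.mk.injEq, not_and]
          intro h; exfalso; apply hne; rw [hc]
          have : (p1 : ℕ) = c := by rw [h]
          omega
        rw [if_pos rfl, if_neg hp0, if_neg hne, if_neg hnp, Matrix.zero_apply, Matrix.one_apply]
        by_cases h2 : p2 = q2
        · subst h2
          rw [if_pos rfl, if_pos rfl]
          have hpow : lam * lam ^ (m - 1 - (p1:ℕ)) = lam ^ (m - (p1:ℕ)) := by
            rw [mul_comm, ← pow_succ]; congr 1; have := p1.isLt; omega
          ring_nf
          rw [hpow]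
        · rw [if_neg h2, if_neg (by intro h; exact h2 (Prod.mk.inj h).2)]
          ring
      · rw [if_neg h1, Matrix.zero_apply]
        by_cases h3 : (q1 : ℕ) = (p1 : ℕ) + 1
        · have hp : p1 = prev := by
            have hpc : (prev : ℕ) = c := rfl
            apply Fin.ext
            omega
          subst hp
          rw [if_pos h3, Matrix.one_apply]
          by_cases h2 : p2 = q2
          · subst h2
            rw [if_pos rfl, if_neg (by intro h; exact h1 (Prod.mk.inj h).1), if_pos rfl]
            have : m - 1 - c = m - (q1 : ℕ) := by omega
            rw [this]; ring
          · rw [if_neg h2, if_neg (by intro h; exact h2 (Prod.mk.inj h).2),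
              if_neg (by intro h; exact h2 (Prod.mk.inj h).2)]
            ring
        · rw [if_neg h3, Matrix.zero_apply,
            if_neg (by intro h; exact h1 (Prod.mk.inj h).1),
            if_neg (by
              intro h
              obtain ⟨h4, -⟩ := Prod.mk.inj h
              apply h3
              have h6 : (p1 : ℕ) = c := by rw [h4]
              omega)]
          ring
    rw [Finset.sum_congr rfl fun p _ => step p]
    rw [Finset.sum_sub_distrib, Finset.sum_ite_eq', Finset.sum_ite_eq']
    simp

lemma stmt17_vecMul_eC (m n r : ℕ) (C : Matrix (Fin r) (Fin n) ℂ) (y : Fin r → ℂ)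
    (q : Fin m × Fin n) :
    Matrix.vecMul y (eC m n r 1 C) q
      = if (q.1 : ℕ) = 0 then Matrix.vecMul y C q.2 else 0 := by
  obtain ⟨q1, q2⟩ := q
  simp only [Matrix.vecMul, dotProduct, eC, Matrix.of_apply]
  by_cases h : (q1 : ℕ) = 0
  · rw [if_pos h]
    exact Finset.sum_congr rfl fun i _ => by rw [if_pos (by omega)]
  · rw [if_neg h]
    calc ∑ i : Fin r, y i * (if (q1 : ℕ) + 1 = 1 then C i q2 else 0)
        = ∑ _i : Fin r, (0 : ℂ) :=
          Finset.sum_congr rfl fun i _ => by rw [if_neg (by omega)]; ring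
      _ = 0 := Finset.sum_const_zero

lemma stmt17_vecMul_eB (m n r : ℕ) (hm : 1 ≤ m) (B : Matrix (Fin n) (Fin r) ℂ)
    (x : Fin m × Fin n → ℂ) (j : Fin r) :
    Matrix.vecMul x (eB m n r m B) j
      = ∑ p2 : Fin n, x (⟨m - 1, by omega⟩, p2) * B p2 j := by
  simp only [Matrix.vecMul, dotProduct, eB, Matrix.of_apply]
  rw [Fintype.sum_prod_type]
  have step : ∀ p1 : Fin m, ∀ p2 : Fin n,
      x (p1, p2) * (if (p1 : ℕ) + 1 = m then B p2 j else 0)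
        = if p1 = (⟨m - 1, by omega⟩ : Fin m) then x (p1, p2) * B p2 j else 0 := by
    intro p1 p2
    by_cases h : p1 = (⟨m - 1, by omega⟩ : Fin m)
    · rw [if_pos h, if_pos]
      subst h
      show (m : ℕ) - 1 + 1 = m
      omega
    · rw [if_neg h, if_neg, mul_zero]
      intro hc
      exact h (Fin.ext (by show (p1 : ℕ) = m - 1; omega))
  rw [Finset.sum_congr rfl fun p1 _ => Finset.sum_congr rfl fun p2 _ => step p1 p2]
  rw [Finset.sum_comm]
  refine Finset.sum_congr rfl fun p2 _ => ?_
  rw [Finset.sum_ite_eq' Finset.univ (⟨m - 1, by omega⟩ : Fin m)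
    (fun p1 => x (p1, p2) * B p2 j), if_pos (Finset.mem_univ _)]

lemma stmt17_colStep (m n : ℕ) (hm : 2 ≤ m) (A : Fin (m + 1) → Matrix (Fin n) (Fin n) ℂ)
    (lam : ℂ) (x : Fin m × Fin n → ℂ) (c : ℕ) (hc : c + 1 < m) (q2 : Fin n) :
    Matrix.vecMul x (lam • FM m n A m - N2 m n A) (⟨c + 1, hc⟩, q2)
      = lam * x (⟨c + 1, hc⟩, q2) - x (⟨c, by omega⟩, q2) := by
  have hm0 : m ≠ 0 := by omega
  set q1 : Fin m := ⟨c + 1, hc⟩ with hq1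
  set prev : Fin m := ⟨c, by omega⟩ with hprev
  have hq : ¬ (q1 : ℕ) = 0 := by simp [hq1]
  simp only [Matrix.vecMul, dotProduct, Matrix.sub_apply, Matrix.smul_apply,
    smul_eq_mul, FM, N2, hm0, if_false, if_true, Matrix.of_apply]
  have step : ∀ p : Fin m × Fin n,
      x p *
        (lam * (if p.1 = q1 then if (p.1 : ℕ) = 0 then A ((m : ℕ) : Fin (m+1)) else 1 else 0) p.2 q2 -
          (if (q1 : ℕ) = 0 then -A ((m - 1 - (p.1 : ℕ) : ℕ) : Fin (m + 1))
            else if (q1 : ℕ) = (p.1 : ℕ) + 1 then (1 : Matrix (Fin n) (Fin n) ℂ) else 0) p.2 q2)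
      = (if p = (q1, q2) then lam * x p else 0) - (if p = (prev, q2) then x p else 0) := by
    rintro ⟨p1, p2⟩
    rw [if_neg hq]
    have hq1v : (q1 : ℕ) = c + 1 := rfl
    have hprevv : (prev : ℕ) = c := rfl
    by_cases h1 : p1 = q1
    · have hp1v : (p1 : ℕ) = c + 1 := by rw [h1]
      have hp0 : ¬ (p1 : ℕ) = 0 := by omega
      have hne : ¬ (q1 : ℕ) = (p1 : ℕ) + 1 := by omega
      have hnp : ¬ ((p1, p2) = (prev, q2)) := by
        intro h
        obtain ⟨h4, -⟩ := Prod.mk.inj h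
        have : (p1 : ℕ) = c := by rw [h4]
        omega
      rw [if_pos h1, if_neg hp0, if_neg hne, if_neg hnp, Matrix.zero_apply, Matrix.one_apply]
      by_cases h2 : p2 = q2
      · subst h2
        rw [if_pos rfl, if_pos (by rw [h1])]
        ring
      · rw [if_neg h2, if_neg (by intro h; exact h2 (Prod.mk.inj h).2)]
        ring
    · rw [if_neg h1, Matrix.zero_apply]
      by_cases h3 : (q1 : ℕ) = (p1 : ℕ) + 1
      · have hp : p1 = prev := by
          apply Fin.ext
          omega
        subst hp
        rw [if_pos h3, Matrix.one_apply]
        by_cases h2 : p2 = q2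
        · subst h2
          rw [if_pos rfl, if_neg (by intro h; exact h1 (Prod.mk.inj h).1), if_pos rfl]
          ring
        · rw [if_neg h2, if_neg (by intro h; exact h2 (Prod.mk.inj h).2),
            if_neg (by intro h; exact h2 (Prod.mk.inj h).2)]
          ring
      · rw [if_neg h3, Matrix.zero_apply,
          if_neg (by intro h; exact h1 (Prod.mk.inj h).1),
          if_neg (by
            intro h
            obtain ⟨h4, -⟩ := Prod.mk.inj h
            apply h3
            have h6 : (p1 : ℕ) = c := by rw [h4]
            omega)]
        ring
  rw [Finset.sum_congr rfl fun p _ => step p]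
  rw [Finset.sum_sub_distrib, Finset.sum_ite_eq', Finset.sum_ite_eq']
  simp

lemma stmt17_keyForward (m n r : ℕ) (hm : 2 ≤ m)
    (A : Fin (m + 1) → Matrix (Fin n) (Fin n) ℂ)
    (B : Matrix (Fin n) (Fin r) ℂ) (C : Matrix (Fin r) (Fin n) ℂ) (D : Matrix (Fin r) (Fin r) ℂ)
    (lam : ℂ) (t : Fin n → ℂ) (y : Fin r → ℂ) :
    Matrix.vecMul
        (Sum.elim (fun p : Fin m × Fin n => lam ^ (m - 1 - (p.1 : ℕ)) * t p.2) y)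
        (C2P m n r A B C D lam)
      = Sum.elim
          (fun q : Fin m × Fin n =>
            if (q.1 : ℕ) = 0 then
              Matrix.vecMul y C q.2 - Matrix.vecMul t (PEval m n A lam) q.2 else 0)
          (fun j => Matrix.vecMul t B j + Matrix.vecMul y D j) := by
  rw [C2P, Matrix.vecMul_fromBlocks]
  simp only [Sum.elim_comp_inl, Sum.elim_comp_inr]
  funext z
  cases z with
  | inl q =>
    rw [Sum.elim_inl, Sum.elim_inl, Pi.add_apply, Matrix.vecMul_neg, Pi.neg_apply,
      stmt17_vecMul_L2 m n hm A lam t q, stmt17_vecMul_eC m n r C y q]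
    by_cases h : (q.1 : ℕ) = 0
    · rw [if_pos h, if_pos h, if_pos h]; ring
    · rw [if_neg h, if_neg h, if_neg h]; ring
  | inr j =>
    rw [Sum.elim_inr, Sum.elim_inr, Pi.add_apply, stmt17_vecMul_eB m n r (by omega) B _ j]
    congr 1
    simp only [Matrix.vecMul, dotProduct]
    refine Finset.sum_congr rfl fun p2 _ => ?_
    rw [show m - 1 - ((⟨m - 1, by omega⟩ : Fin m) : ℕ) = 0 from by show m - 1 - (m - 1) = 0; omega,
      pow_zero, one_mul]


/-- The candidate left-null-vector map `y ↦ (λ^{m-1}s, …, s, y)` as a linear map. -/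
def stmt17_psi (m n r : ℕ) (lam : ℂ) (CP : Matrix (Fin r) (Fin n) ℂ) :
    (Fin r → ℂ) →ₗ[ℂ] ((Fin m × Fin n) ⊕ Fin r → ℂ) where
  toFun y :=
    Sum.elim (fun p : Fin m × Fin n => lam ^ (m - 1 - (p.1 : ℕ)) * Matrix.vecMul y CP p.2) y
  map_add' y z := by
    funext w
    cases w with
    | inl p => simp [Matrix.add_vecMul]; ring
    | inr j => simp
  map_smul' a y := by
    funext w
    cases w with
    | inl p => simp [Matrix.smul_vecMul]; ring
    | inr j => simp

lemma stmt17_psi_apply (m n r : ℕ) (lam : ℂ) (CP : Matrix (Fin r) (Fin n) ℂ) (y : Fin r → ℂ) :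
    stmt17_psi m n r lam CP y
      = Sum.elim (fun p : Fin m × Fin n => lam ^ (m - 1 - (p.1 : ℕ)) * Matrix.vecMul y CP p.2) y :=
  rfl

lemma stmt17_main (m n r : ℕ) (hm : 2 ≤ m)
    (A : Fin (m + 1) → Matrix (Fin n) (Fin n) ℂ)
    (B : Matrix (Fin n) (Fin r) ℂ) (C : Matrix (Fin r) (Fin n) ℂ) (D : Matrix (Fin r) (Fin r) ℂ)
    (lam : ℂ) (hP : IsUnit (PEval m n A lam).det) :
    (∀ y : Fin r → ℂ,
      Matrix.vecMul (stmt17_psi m n r lam (C * (PEval m n A lam)⁻¹) y) (C2P m n r A B C D lam)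
        = Sum.elim (fun _ : Fin m × Fin n => (0 : ℂ))
            (Matrix.vecMul y (C * (PEval m n A lam)⁻¹ * B + D))) ∧
    (∀ u : (Fin m × Fin n) ⊕ Fin r → ℂ,
      Matrix.vecMul u (C2P m n r A B C D lam) = 0 →
        Matrix.vecMul (u ∘ Sum.inr) (C * (PEval m n A lam)⁻¹ * B + D) = 0 ∧
        u = stmt17_psi m n r lam (C * (PEval m n A lam)⁻¹) (u ∘ Sum.inr)) := by
  have hsP : ∀ y : Fin r → ℂ,
      Matrix.vecMul (Matrix.vecMul y (C * (PEval m n A lam)⁻¹)) (PEval m n A lam)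
        = Matrix.vecMul y C := by
    intro y
    rw [Matrix.vecMul_vecMul, Matrix.mul_assoc, Matrix.nonsing_inv_mul _ hP, Matrix.mul_one]
  have hFwd : ∀ y : Fin r → ℂ,
      Matrix.vecMul (stmt17_psi m n r lam (C * (PEval m n A lam)⁻¹) y) (C2P m n r A B C D lam)
        = Sum.elim (fun _ : Fin m × Fin n => (0 : ℂ))
            (Matrix.vecMul y (C * (PEval m n A lam)⁻¹ * B + D)) := by
    intro y
    rw [stmt17_psi_apply,
      stmt17_keyForward m n r hm A B C D lam (Matrix.vecMul y (C * (PEval m n A lam)⁻¹)) y]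
    funext z
    cases z with
    | inl q =>
      rw [Sum.elim_inl, Sum.elim_inl]
      split_ifs with h
      · rw [hsP y]; ring
      · rfl
    | inr j =>
      rw [Sum.elim_inr, Sum.elim_inr, Matrix.vecMul_add, Pi.add_apply, Matrix.vecMul_vecMul]
  refine ⟨hFwd, ?_⟩
  intro u hu
  set x : Fin m × Fin n → ℂ := u ∘ Sum.inl with hxdef
  set y : Fin r → ℂ := u ∘ Sum.inr with hydef
  have hsplit : u = Sum.elim x y := by funext z; cases z <;> rfl
  have hcols := hu
  rw [hsplit, C2P, Matrix.vecMul_fromBlocks] at hcols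
  simp only [Sum.elim_comp_inl, Sum.elim_comp_inr] at hcols
  have hrec : ∀ c (hc : c + 1 < m) (q2 : Fin n),
      x (⟨c, by omega⟩, q2) = lam * x (⟨c + 1, hc⟩, q2) := by
    intro c hc q2
    have h := congrFun hcols (Sum.inl (⟨c + 1, hc⟩, q2))
    rw [Sum.elim_inl, Pi.zero_apply, Pi.add_apply, Matrix.vecMul_neg, Pi.neg_apply,
      stmt17_colStep m n hm A lam x c hc q2,
      stmt17_vecMul_eC m n r C y (⟨c + 1, hc⟩, q2)] at h
    rw [if_neg (show ¬ (((⟨c + 1, hc⟩ : Fin m) : ℕ) = 0) from by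
      show ¬ (c + 1 = 0); omega)] at h
    linear_combination h
  have aux : ∀ j, j < m → ∀ q2 : Fin n,
      x (⟨m - 1 - j, by omega⟩, q2) = lam ^ j * x (⟨m - 1, by omega⟩, q2) := by
    intro j
    induction j with
    | zero =>
      intro _ q2
      rw [show (⟨m - 1 - 0, by omega⟩ : Fin m) = ⟨m - 1, by omega⟩ from
        Fin.ext (by show m - 1 - 0 = m - 1; omega)]
      rw [pow_zero, one_mul]
    | succ k ih =>
      intro hk q2
      have h1 := hrec (m - 1 - (k + 1)) (by omega) q2
      have e : (⟨m - 1 - (k + 1) + 1, by omega⟩ : Fin m) = ⟨m - 1 - k, by omega⟩ :=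
        Fin.ext (by show m - 1 - (k + 1) + 1 = m - 1 - k; omega)
      rw [e] at h1
      rw [h1, ih (by omega) q2, pow_succ]
      ring
  set t : Fin n → ℂ := fun q2 => x (⟨m - 1, by omega⟩, q2) with htdef
  have hform : x = fun p : Fin m × Fin n => lam ^ (m - 1 - (p.1 : ℕ)) * t p.2 := by
    funext p
    obtain ⟨p1, p2⟩ := p
    have h := aux (m - 1 - (p1 : ℕ)) (by have := p1.isLt; omega) p2
    have e : (⟨m - 1 - (m - 1 - (p1 : ℕ)), by omega⟩ : Fin m) = p1 :=
      Fin.ext (by show m - 1 - (m - 1 - (p1 : ℕ)) = (p1 : ℕ); have := p1.isLt; omega)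
    rw [e] at h
    exact h
  have hu1 : Matrix.vecMul
      (Sum.elim (fun p : Fin m × Fin n => lam ^ (m - 1 - (p.1 : ℕ)) * t p.2) y)
      (C2P m n r A B C D lam) = 0 := by
    rw [← hform, ← hsplit]
    exact hu
  rw [stmt17_keyForward m n r hm A B C D lam t y] at hu1
  have htP : Matrix.vecMul t (PEval m n A lam) = Matrix.vecMul y C := by
    funext q2
    have h := congrFun hu1 (Sum.inl (⟨0, by omega⟩, q2))
    rw [Sum.elim_inl, Pi.zero_apply] at h
    rw [if_pos (show ((⟨0, by omega⟩ : Fin m) : ℕ) = 0 from rfl)] at h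
    linear_combination -h
  have ht : t = Matrix.vecMul y (C * (PEval m n A lam)⁻¹) := by
    have h2 := congrArg (fun v => Matrix.vecMul v (PEval m n A lam)⁻¹) htP
    rw [Matrix.vecMul_vecMul, Matrix.vecMul_vecMul, Matrix.mul_nonsing_inv _ hP,
      Matrix.vecMul_one] at h2
    exact h2
  have hyG : Matrix.vecMul y (C * (PEval m n A lam)⁻¹ * B + D) = 0 := by
    funext j
    have h := congrFun hu1 (Sum.inr j)
    rw [Sum.elim_inr, Pi.zero_apply] at h
    rw [Matrix.vecMul_add, Pi.add_apply, ← Matrix.vecMul_vecMul, ← ht]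
    exact h
  refine ⟨hyG, ?_⟩
  rw [stmt17_psi_apply, hsplit]
  funext z
  cases z with
  | inl p =>
    rw [Sum.elim_inl, Sum.elim_inl, hform, ht]
  | inr j => rfl

/-- with `s := (C P(λ)⁻¹)ᵀ y` and `u := (λ^{m−1}s, …, λs, s, y)`, we have
`yᵀ G(λ) = 0 ↔ uᵀ C_2(λ) = 0`, and `y ↦ u` is a linear isomorphism from the left null
space of `G(λ)` onto the left null space of the second companion form `C_2(λ)`. -/
theorem stmt17 (m n r : ℕ) (hm : 2 ≤ m) (hn : 1 ≤ n) (hr : 1 ≤ r)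
    (A : Fin (m + 1) → Matrix (Fin n) (Fin n) ℂ) (hreg : Regular m n A)
    (B : Matrix (Fin n) (Fin r) ℂ) (C : Matrix (Fin r) (Fin n) ℂ)
    (D : Matrix (Fin r) (Fin r) ℂ)
    (lam : ℂ) (hP : IsUnit (PEval m n A lam).det) :
    (∀ y : Fin r → ℂ,
      (C * (PEval m n A lam)⁻¹ * B + D)ᵀ.mulVec y = 0 ↔
        (C2P m n r A B C D lam)ᵀ.mulVec
          (Sum.elim
            (fun p : Fin m × Fin n =>
              lam ^ (m - 1 - (p.1 : ℕ)) * (C * (PEval m n A lam)⁻¹)ᵀ.mulVec y p.2)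
            y) = 0) ∧
    ∃ φ : LinearMap.ker (Matrix.mulVecLin (C * (PEval m n A lam)⁻¹ * B + D)ᵀ) ≃ₗ[ℂ]
        LinearMap.ker (Matrix.mulVecLin (C2P m n r A B C D lam)ᵀ),
      ∀ y, (φ y : (Fin m × Fin n) ⊕ Fin r → ℂ) =
        Sum.elim
          (fun p : Fin m × Fin n =>
            lam ^ (m - 1 - (p.1 : ℕ)) *
              (C * (PEval m n A lam)⁻¹)ᵀ.mulVec (y : Fin r → ℂ) p.2)
          (y : Fin r → ℂ) := by
  obtain ⟨hFwd, hSur⟩ := stmt17_main m n r hm A B C D lam hP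
  have hpsi_eq : ∀ y : Fin r → ℂ,
      stmt17_psi m n r lam (C * (PEval m n A lam)⁻¹) y
        = Sum.elim
            (fun p : Fin m × Fin n =>
              lam ^ (m - 1 - (p.1 : ℕ)) * (C * (PEval m n A lam)⁻¹)ᵀ.mulVec y p.2) y := by
    intro y
    rw [stmt17_psi_apply]
    funext z
    cases z with
    | inl p => rw [Sum.elim_inl, Sum.elim_inl, Matrix.mulVec_transpose]
    | inr j => rfl
  constructor
  · intro y
    rw [Matrix.mulVec_transpose, Matrix.mulVec_transpose, ← hpsi_eq y, hFwd y]
    constructor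
    · intro h
      rw [h]
      funext z
      cases z <;> simp
    · intro h
      funext j
      exact congrFun h (Sum.inr j)
  · have hmemf : ∀ c : LinearMap.ker (Matrix.mulVecLin (C * (PEval m n A lam)⁻¹ * B + D)ᵀ),
        ((stmt17_psi m n r lam (C * (PEval m n A lam)⁻¹)).comp
          (Submodule.subtype _)) c ∈
            LinearMap.ker (Matrix.mulVecLin (C2P m n r A B C D lam)ᵀ) := by
      rintro ⟨y, hy⟩
      rw [LinearMap.mem_ker] at hy ⊢
      rw [Matrix.mulVecLin_apply, Matrix.mulVec_transpose] at hy
      show Matrix.mulVecLin (C2P m n r A B C D lam)ᵀ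
        (stmt17_psi m n r lam (C * (PEval m n A lam)⁻¹) y) = 0
      rw [Matrix.mulVecLin_apply, Matrix.mulVec_transpose, hFwd y, hy]
      funext z
      cases z <;> simp
    have hmemg : ∀ c : LinearMap.ker (Matrix.mulVecLin (C2P m n r A B C D lam)ᵀ),
        ((LinearMap.funLeft ℂ ℂ Sum.inr).comp (Submodule.subtype _)) c ∈
          LinearMap.ker (Matrix.mulVecLin (C * (PEval m n A lam)⁻¹ * B + D)ᵀ) := by
      rintro ⟨u, hu⟩
      rw [LinearMap.mem_ker] at hu ⊢
      rw [Matrix.mulVecLin_apply, Matrix.mulVec_transpose] at hu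
      show Matrix.mulVecLin (C * (PEval m n A lam)⁻¹ * B + D)ᵀ (u ∘ Sum.inr) = 0
      rw [Matrix.mulVecLin_apply, Matrix.mulVec_transpose]
      exact (hSur u hu).1
    refine ⟨LinearEquiv.ofLinear
      (LinearMap.codRestrict _ ((stmt17_psi m n r lam (C * (PEval m n A lam)⁻¹)).comp
        (Submodule.subtype _)) hmemf)
      (LinearMap.codRestrict _ ((LinearMap.funLeft ℂ ℂ Sum.inr).comp
        (Submodule.subtype _)) hmemg) ?_ ?_, ?_⟩
    · apply LinearMap.ext
      rintro ⟨u, hu⟩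
      apply Subtype.ext
      have hu' : Matrix.vecMul u (C2P m n r A B C D lam) = 0 := by
        rw [LinearMap.mem_ker, Matrix.mulVecLin_apply, Matrix.mulVec_transpose] at hu
        exact hu
      exact ((hSur u hu').2).symm
    · apply LinearMap.ext
      rintro ⟨y, hy⟩
      apply Subtype.ext
      funext j
      rfl
    · rintro ⟨y, hy⟩
      exact hpsi_eq y


end
end
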